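/- arXiv:2308.07422 — 4 statements merged into one kernel-verified Lean document; each statement's English description precedes it below -/
import Mathlib

section
/- Let y_1,...,y_n be nonnegative reals with y_1 + ... + y_n = 1. For each positive integer N, let G_N be the disjoint union over i of complete graphs on ⌊y_i^{1/4} N⌋ + 1 vertices. Then for every integer j ≥ 2, the ratio hom(C_{4j};G_N)/hom(C_4;G_N)^j converges to Σ_i y_i^j as N → ∞. -/
open SimpleGraph

/-- The number of graph homomorphisms from `H` to `G`. -/
noncomputable def homCount {α β : Type*} (H : SimpleGraph α) (G : SimpleGraph β) : ℕ :=
  Nat.card (H →g G)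

/-- The disjoint union of complete graphs `K_{m i}`, `i = 1, …, n`. -/
def disjointUnionCompletes (n : ℕ) (m : Fin n → ℕ) : SimpleGraph (Σ i : Fin n, Fin (m i)) where
  Adj a b := a.1 = b.1 ∧ a ≠ b
  symm := by constructor; rintro a b ⟨h1, h2⟩; exact ⟨h1.symm, h2.symm⟩
  loopless := by constructor; rintro a ⟨_, h⟩; exact h rfl

open Finset Filter


section CycCount
variable {t : ℕ} [NeZero t]
open scoped Fin.CommRing

def Sseq (m t : ℕ) [NeZero t] : Type := {d : Fin m → Fin t // (∀ k, d k ≠ 0) ∧ ∑ k, d k = 0}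
def Nseq (m t : ℕ) [NeZero t] : Type := {d : Fin m → Fin t // (∀ k, d k ≠ 0) ∧ ∑ k, d k ≠ 0}
def Cyc (m t : ℕ) [NeZero m] : Type := {g : Fin m → Fin t // ∀ k, g k ≠ g (k + 1)}

noncomputable instance (m : ℕ) : Fintype (Sseq m t) := by unfold Sseq; exact Fintype.ofFinite _
noncomputable instance (m : ℕ) : Fintype (Nseq m t) := by unfold Nseq; exact Fintype.ofFinite _
noncomputable instance (m : ℕ) [NeZero m] : Fintype (Cyc m t) := by
  unfold Cyc; exact Fintype.ofFinite _

lemma card_nonzero : Fintype.card {x : Fin t // x ≠ 0} = t - 1 := by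
  simp [Fintype.card_subtype_compl]

lemma card_nonzero_seqs (m : ℕ) :
    Fintype.card {d : Fin m → Fin t // ∀ k, d k ≠ 0} = (t-1)^m :=
  calc Fintype.card {d : Fin m → Fin t // ∀ k, d k ≠ 0}
      = Fintype.card (Fin m → {x : Fin t // x ≠ 0}) :=
        Fintype.card_congr (Equiv.subtypePiEquivPi (p := fun (_ : Fin m) (x : Fin t) => x ≠ 0))
    _ = (t-1)^m := by simp [card_nonzero]

lemma card_split (m : ℕ) :
    Fintype.card (Sseq m t) + Fintype.card (Nseq m t) = (t-1)^m := by
  classical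
  rw [← card_nonzero_seqs (t := t) m, ← Fintype.card_sum]
  apply Fintype.card_congr
  exact (Equiv.sumCongr
    ((Equiv.subtypeSubtypeEquivSubtypeInter (fun d : Fin m → Fin t => ∀ k, d k ≠ 0)
      (fun d => ∑ k, d k = 0)).symm)
    ((Equiv.subtypeSubtypeEquivSubtypeInter (fun d : Fin m → Fin t => ∀ k, d k ≠ 0)
      (fun d => ¬ ∑ k, d k = 0)).symm)).trans
    (Equiv.sumCompl (fun x : {d : Fin m → Fin t // ∀ k, d k ≠ 0} => ∑ k, x.1 k = 0))

lemma sum_init {m : ℕ} (d : Fin (m+1) → Fin t) (hd : ∑ k, d k = 0) :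
    ∑ k : Fin m, Fin.init d k = -d (Fin.last m) := by
  have h := Fin.sum_univ_castSucc (f := d)
  rw [hd] at h
  unfold Fin.init
  linear_combination -h

def seqEquiv (m : ℕ) : Sseq (m+1) t ≃ Nseq m t where
  toFun d := ⟨Fin.init d.1, fun k => d.2.1 _, by
    rw [sum_init d.1 d.2.2]
    simpa using d.2.1 (Fin.last m)⟩
  invFun e := ⟨Fin.snoc e.1 (-(∑ k, e.1 k)), by
    intro k
    refine Fin.lastCases ?_ ?_ k
    · rw [Fin.snoc_last]; simpa using e.2.2
    · intro i; rw [Fin.snoc_castSucc]; exact e.2.1 i, by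
    rw [Fin.sum_univ_castSucc]
    simp⟩
  left_inv d := by
    apply Subtype.ext
    simp only
    rw [sum_init d.1 d.2.2, neg_neg, Fin.snoc_init_self]
  right_inv e := by
    apply Subtype.ext
    simp only
    rw [Fin.init_snoc]

lemma card_Sseq_zero : Fintype.card (Sseq 0 t) = 1 := by
  refine Fintype.card_eq_one_iff.mpr ⟨⟨fun k => k.elim0, fun k => k.elim0, by simp⟩, ?_⟩
  intro y
  apply Subtype.ext
  funext k
  exact k.elim0

lemma key : ∀ m : ℕ, (t:ℤ) * Fintype.card (Sseq m t) = ((t:ℤ)-1)^m + (-1)^m * ((t:ℤ)-1) := by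
  intro m
  induction m with
  | zero => simp [card_Sseq_zero]
  | succ m ih =>
    have h1 := card_split (t := t) m
    have h2 : Fintype.card (Sseq (m+1) t) = Fintype.card (Nseq m t) :=
      Fintype.card_congr (seqEquiv m)
    have h1le : 1 ≤ t := Nat.one_le_iff_ne_zero.mpr (NeZero.ne t)
    have h1' : (Fintype.card (Sseq m t) : ℤ) + Fintype.card (Nseq m t) = ((t:ℤ)-1)^m := by
      have h := congrArg (fun x : ℕ => (x:ℤ)) h1
      push_cast [h1le] at h
      exact h
    rw [h2]
    have : (Fintype.card (Nseq m t) : ℤ) = ((t:ℤ)-1)^m - Fintype.card (Sseq m t) := by linarith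
    rw [this]
    rw [pow_succ, pow_succ]
    ring_nf
    ring_nf at ih
    linarith [ih]

def P {m : ℕ} (d : Fin m → Fin t) (k : Fin m) : Fin t :=
  ∑ i : Fin m, if (i:ℕ) < (k:ℕ) then d i else 0

lemma P_zero {m : ℕ} [NeZero m] (d : Fin m → Fin t) : P d 0 = 0 := by
  unfold P
  simp

lemma P_succ {m : ℕ} (d : Fin (m+1) → Fin t) (hd : ∑ k, d k = 0) (k : Fin (m+1)) :
    P d (k+1) = P d k + d k := by
  rcases lt_or_eq_of_le (Nat.succ_le_of_lt k.isLt) with h | h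
  · have hval : ((k+1 : Fin (m+1)) : ℕ) = (k:ℕ) + 1 :=
      Fin.val_add_one_of_lt (by rwa [Fin.lt_iff_val_lt_val, Fin.val_last, ← Nat.succ_lt_succ_iff])
    unfold P
    rw [hval]
    have : ∀ i : Fin (m+1), (if (i:ℕ) < (k:ℕ)+1 then d i else 0)
        = (if (i:ℕ) < (k:ℕ) then d i else 0) + (if i = k then d i else 0) := by
      intro i
      rcases lt_trichotomy (i:ℕ) (k:ℕ) with hi | hi | hi
      · rw [if_pos (Nat.lt_succ_of_lt hi), if_pos hi,
          if_neg (by intro hh; subst hh; exact lt_irrefl _ hi), add_zero]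
      · have : i = k := Fin.ext hi
        subst this
        rw [if_pos (Nat.lt_succ_self _), if_neg (lt_irrefl _), if_pos rfl, zero_add]
      · rw [if_neg (by omega), if_neg (by omega),
          if_neg (by intro hh; subst hh; exact lt_irrefl _ hi), add_zero]
    rw [Finset.sum_congr rfl (fun i _ => this i), Finset.sum_add_distrib,
      Finset.sum_ite_eq' univ k d, if_pos (mem_univ k)]
  · have hk : k = Fin.last m := Fin.ext (by simpa using h)
    subst hk
    rw [Fin.last_add_one, P_zero]
    have : ∀ i : Fin (m+1), (if (i:ℕ) < (Fin.last m : ℕ) then d i else 0)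
        + (if i = Fin.last m then d i else 0) = d i := by
      intro i
      rcases eq_or_ne i (Fin.last m) with hi | hi
      · subst hi; rw [if_neg (lt_irrefl _), if_pos rfl, zero_add]
      · rw [if_pos (by have := Fin.val_lt_last hi; simpa using this), if_neg hi, add_zero]
    have hlast : d (Fin.last m) = ∑ i, if i = Fin.last m then d i else 0 := by
      rw [Finset.sum_ite_eq' univ (Fin.last m) d, if_pos (mem_univ _)]
    have hsum : P d (Fin.last m) + d (Fin.last m) = ∑ i, d i := by
      unfold P
      rw [hlast, ← Finset.sum_add_distrib]
      exact Finset.sum_congr rfl (fun i _ => this i)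
    exact (hsum.trans hd).symm

lemma sum_shift {m : ℕ} [NeZero m] (g : Fin m → Fin t) :
    ∑ k : Fin m, g (k + 1) = ∑ k, g k :=
  Fintype.sum_equiv (Equiv.addRight 1) _ _ (fun _ => rfl)

def cycEquiv (m : ℕ) : Cyc (m+1) t ≃ (Fin t × Sseq (m+1) t) where
  toFun g := ⟨g.1 0, ⟨fun k => g.1 (k+1) - g.1 k,
    fun k => sub_ne_zero.mpr (Ne.symm (g.2 k)),
    by rw [Finset.sum_sub_distrib, sum_shift, sub_self]⟩⟩
  invFun ad := ⟨fun k => ad.1 + P ad.2.1 k, by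
    intro k
    show ad.1 + P ad.2.1 k ≠ ad.1 + P ad.2.1 (k+1)
    rw [P_succ ad.2.1 ad.2.2.2 k]
    intro hh
    exact ad.2.2.1 k (by linear_combination -hh)⟩
  left_inv g := by
    apply Subtype.ext
    funext k
    show g.1 0 + P (fun k => g.1 (k+1) - g.1 k) k = g.1 k
    set d : Fin (m+1) → Fin t := fun k => g.1 (k+1) - g.1 k with hd
    have hdsum : ∑ k, d k = 0 := by rw [hd]; rw [Finset.sum_sub_distrib, sum_shift, sub_self]
    have claim : ∀ j (h : j < m+1), g.1 0 + P d ⟨j, h⟩ = g.1 ⟨j, h⟩ := by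
      intro j
      induction j with
      | zero =>
        intro h
        have h0 : (⟨0, h⟩ : Fin (m+1)) = 0 := rfl
        rw [h0, P_zero, add_zero]
      | succ j ih =>
        intro h
        have hj : j < m + 1 := Nat.lt_of_succ_lt h
        have hstep : (⟨j+1, h⟩ : Fin (m+1)) = ⟨j, hj⟩ + 1 := by
          apply Fin.ext
          rw [Fin.val_add_one_of_lt (by simp [Fin.lt_iff_val_lt_val]; omega)]
        rw [hstep, P_succ d hdsum, ← add_assoc, ih hj]
        show g.1 ⟨j, hj⟩ + (g.1 (⟨j, hj⟩ + 1) - g.1 ⟨j, hj⟩) = _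
        ring
    have := claim (k : ℕ) k.isLt
    simpa using this
  right_inv ad := by
    refine Prod.ext ?_ ?_
    · show ad.1 + P ad.2.1 0 = ad.1
      rw [P_zero, add_zero]
    · apply Subtype.ext
      funext k
      show (ad.1 + P ad.2.1 (k+1)) - (ad.1 + P ad.2.1 k) = ad.2.1 k
      rw [P_succ ad.2.1 ad.2.2.2 k]
      ring

/-- The number of proper cyclic sequences of even length `m+2` with values in `Fin (s+1)`. -/
lemma card_Cyc_even (s m : ℕ) (hm : Even (m+2)) :
    Fintype.card (Cyc (m+2) (s+1)) = s^(m+2) + s := by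
  have h1 : Fintype.card (Cyc (m+2) (s+1)) = (s+1) * Fintype.card (Sseq (m+2) (s+1)) := by
    rw [Fintype.card_congr (cycEquiv (t := s+1) (m+1))]
    rw [Fintype.card_prod, Fintype.card_fin]
  have h2 := key (t := s+1) (m+2)
  rw [hm.neg_one_pow] at h2
  have : ((s:ℤ)+1-1) = (s:ℤ) := by ring
  rw [Nat.cast_add, Nat.cast_one, this, one_mul] at h2
  have : ((Fintype.card (Cyc (m+2) (s+1)) : ℕ) : ℤ) = ((s^(m+2) + s : ℕ) : ℤ) := by
    rw [h1]
    push_cast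
    linarith [h2]
  exact_mod_cast this

end CycCount


def homEquiv (m : ℕ) {V : Type*} (G : SimpleGraph V) :
    (cycleGraph (m+2) →g G) ≃ {f : Fin (m+2) → V // ∀ k, G.Adj (f k) (f (k+1))} where
  toFun f := ⟨f, fun k => f.map_adj (by
    rw [cycleGraph_adj]
    right
    exact add_sub_cancel_left k 1)⟩
  invFun fp := ⟨fp.1, by
    intro u v huv
    rw [cycleGraph_adj] at huv
    rcases huv with h | h
    · have : u = v + 1 := by rw [sub_eq_iff_eq_add] at h; exact h.trans (add_comm 1 v)
      subst this
      exact (fp.2 v).symm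
    · have : v = u + 1 := by rw [sub_eq_iff_eq_add] at h; exact h.trans (add_comm 1 u)
      subst this
      exact fp.2 u⟩
  left_inv f := rfl
  right_inv fp := rfl

noncomputable def componentEquiv (m n : ℕ) (s : Fin n → ℕ) :
    (Σ i : Fin n, Cyc (m+2) (s i + 1)) ≃
      {f : Fin (m+2) → (Σ i : Fin n, Fin (s i + 1)) //
        ∀ k, (disjointUnionCompletes n (fun i => s i + 1)).Adj (f k) (f (k+1))} := by
  apply Equiv.ofBijective (f := fun ig => ⟨fun k => ⟨ig.1, ig.2.1 k⟩, by
    intro k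
    refine ⟨rfl, ?_⟩
    intro h
    exact ig.2.2 k (eq_of_heq (Sigma.mk.inj_iff.mp h).2)⟩)
  constructor
  · rintro ⟨i, g⟩ ⟨i', g'⟩ h
    have hk : ∀ k, (⟨i, g.1 k⟩ : Σ i, Fin (s i + 1)) = ⟨i', g'.1 k⟩ :=
      fun k => congrFun (congrArg Subtype.val h) k
    have hi : i = i' := (Sigma.mk.inj_iff.mp (hk 0)).1
    subst hi
    refine Sigma.ext rfl (heq_of_eq (Subtype.ext (funext fun k => ?_)))
    exact eq_of_heq (Sigma.mk.inj_iff.mp (hk k)).2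
  · rintro ⟨f, hf⟩
    have claim : ∀ (j) (h : j < m+2), (f ⟨j, h⟩).1 = (f 0).1 := by
      intro j
      induction j with
      | zero => intro h; rfl
      | succ j ih =>
        intro h
        have hj : j < m + 2 := Nat.lt_of_succ_lt h
        have hstep : (⟨j+1, h⟩ : Fin (m+2)) = ⟨j, hj⟩ + 1 := by
          apply Fin.ext
          rw [Fin.val_add_one_of_lt (by simp [Fin.lt_iff_val_lt_val]; omega)]
        rw [hstep, ← (hf ⟨j, hj⟩).1, ih hj]
    have claim' : ∀ k : Fin (m+2), (f k).1 = (f 0).1 := by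
      intro k
      have := claim (k : ℕ) k.isLt
      simpa using this
    refine ⟨⟨(f 0).1, ⟨fun k => Fin.cast (by rw [claim' k]) (f k).2, ?_⟩⟩, ?_⟩
    · intro k hgk
      apply (hf k).2
      have hval : ((f k).2 : ℕ) = ((f (k+1)).2 : ℕ) := by
        have := congrArg Fin.val hgk
        simpa using this
      refine Sigma.ext ((claim' k).trans (claim' (k+1)).symm) ?_
      exact (Fin.heq_ext_iff (by rw [claim' k, claim' (k+1)])).mpr hval
    · apply Subtype.ext
      funext k
      refine Sigma.ext ?_ ?_
      · exact (claim' k).symm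
      · exact (Fin.heq_ext_iff (by rw [claim' k])).mpr (by simp)

lemma homCount_cycle_disjointUnion (m n : ℕ) (hm : Even m) (s : Fin n → ℕ) :
    homCount (cycleGraph (m+2)) (disjointUnionCompletes n (fun i => s i + 1))
      = ∑ i : Fin n, ((s i)^(m+2) + s i) := by
  unfold homCount
  rw [Nat.card_congr (homEquiv m (disjointUnionCompletes n (fun i => s i + 1))),
    Nat.card_congr (componentEquiv m n s).symm, Nat.card_eq_fintype_card, Fintype.card_sigma]
  exact Finset.sum_congr rfl (fun i _ => card_Cyc_even (s i) m (hm.add even_two))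

lemma analMain {n : ℕ} (y : Fin n → ℝ) (hy : ∀ i, 0 ≤ y i) (hsum : ∑ i, y i = 1)
    (j : ℕ) (hj : 2 ≤ j)
    (A B : ℕ → ℝ)
    (hA : ∀ N : ℕ, A N = ∑ i, ((⌊(y i) ^ ((1:ℝ)/4) * N⌋₊ : ℝ)^(4*j) + (⌊(y i) ^ ((1:ℝ)/4) * N⌋₊ : ℝ)))
    (hB : ∀ N : ℕ, B N = ∑ i, ((⌊(y i) ^ ((1:ℝ)/4) * N⌋₊ : ℝ)^4 + (⌊(y i) ^ ((1:ℝ)/4) * N⌋₊ : ℝ))) :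
    Tendsto (fun N : ℕ => A N / (B N)^j) atTop (nhds (∑ i, y i ^ j)) := by
  set x : Fin n → ℝ := fun i => (y i) ^ ((1:ℝ)/4) with hxdef
  have hx : ∀ i, 0 ≤ x i := fun i => Real.rpow_nonneg (hy i) _
  set u : Fin n → ℕ → ℝ := fun i N => (⌊x i * N⌋₊ : ℝ) / N with hudef
  have hfl : ∀ i, Tendsto (fun N : ℕ => u i N) atTop (nhds (x i)) := fun i =>
    (tendsto_nat_floor_mul_div_atTop (hx i)).comp tendsto_natCast_atTop_atTop
  have hinv : Tendsto (fun N : ℕ => ((N:ℝ))⁻¹) atTop (nhds 0) :=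
    tendsto_inv_atTop_zero.comp tendsto_natCast_atTop_atTop
  obtain ⟨p, hp⟩ : ∃ p, 4*j = p+1 := ⟨4*j-1, by omega⟩
  set f : ℕ → ℝ := fun N => ∑ i, ((u i N)^(4*j) + (u i N) * ((N:ℝ)⁻¹)^p) with hfdef
  set g : ℕ → ℝ := fun N => ∑ i, ((u i N)^4 + (u i N) * ((N:ℝ)⁻¹)^3) with hgdef
  have hxpow : ∀ i, (x i)^(4*j) = y i ^ j := by
    intro i
    rw [hxdef]
    rw [← Real.rpow_natCast ((y i) ^ ((1:ℝ)/4)) (4*j), ← Real.rpow_mul (hy i)]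
    rw [← Real.rpow_natCast (y i) j]
    congr 1
    push_cast
    ring
  have hxpow4 : ∀ i, (x i)^4 = y i := by
    intro i
    rw [hxdef, ← Real.rpow_natCast ((y i) ^ ((1:ℝ)/4)) 4, ← Real.rpow_mul (hy i)]
    norm_num
  have hf : Tendsto f atTop (nhds (∑ i, y i ^ j)) := by
    have : Tendsto f atTop (nhds (∑ i, ((x i)^(4*j) + (x i) * (0:ℝ)^p))) := by
      apply tendsto_finset_sum
      intro i _
      exact ((hfl i).pow _).add ((hfl i).mul (hinv.pow _))
    have hzero : (0:ℝ)^p = 0 := zero_pow (by omega)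
    simpa [hzero, hxpow] using this
  have hg : Tendsto g atTop (nhds 1) := by
    have : Tendsto g atTop (nhds (∑ i, ((x i)^4 + (x i) * (0:ℝ)^3))) := by
      apply tendsto_finset_sum
      intro i _
      exact ((hfl i).pow _).add ((hfl i).mul (hinv.pow _))
    simpa [hxpow4, hsum] using this
  have hratio : Tendsto (fun N => f N / (g N)^j) atTop (nhds (∑ i, y i ^ j)) := by
    have := hf.div (hg.pow j) (by norm_num)
    rw [one_pow, div_one] at this
    exact this
  apply hratio.congr'
  filter_upwards [eventually_ge_atTop 1] with N hN
  have hN0 : (N:ℝ) ≠ 0 := Nat.cast_ne_zero.mpr (by omega)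
  have hfN : f N = A N / (N:ℝ)^(4*j) := by
    rw [hfdef, hA N, Finset.sum_div]
    apply Finset.sum_congr rfl
    intro i _
    simp only [hudef, hxdef]
    rw [hp]
    ring
  have hgN : g N = B N / (N:ℝ)^4 := by
    rw [hgdef, hB N, Finset.sum_div]
    apply Finset.sum_congr rfl
    intro i _
    simp only [hudef, hxdef]
    field_simp
  rw [hfN, hgN]
  rcases eq_or_ne (B N) 0 with hB0 | hB0
  · rw [hB0, zero_div, zero_pow (show j ≠ 0 by omega), div_zero, div_zero]
  · rw [div_pow, div_div_div_eq, ← pow_mul]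
    rw [mul_comm (A N) ((N:ℝ) ^ (4*j)), mul_div_mul_left _ _ (pow_ne_zero _ hN0)]

lemma homCount_4j (jj n : ℕ) (hjj : 1 ≤ jj) (s : Fin n → ℕ) :
    homCount (cycleGraph (4*jj)) (disjointUnionCompletes n (fun i => s i + 1))
      = ∑ i : Fin n, ((s i)^(4*jj) + s i) := by
  obtain ⟨m, hm⟩ : ∃ m, 4*jj = m+2 := ⟨4*jj-2, by omega⟩
  rw [hm]
  exact homCount_cycle_disjointUnion m n (Nat.even_iff.mpr (by omega)) s


/-- For nonnegative reals `y_1,…,y_n` summing to `1`, letting `G_N` be the disjoint union of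
complete graphs on `⌊y_i^{1/4} N⌋ + 1` vertices, the ratio `hom(C_{4j};G_N)/hom(C_4;G_N)^j`
converges to `Σ_i y_i^j` as `N → ∞`, for every `j ≥ 2`. -/
theorem cycle_ratio_tendsto_powerSum {n : ℕ} (y : Fin n → ℝ)
    (hy : ∀ i, 0 ≤ y i) (hsum : ∑ i, y i = 1) (j : ℕ) (hj : 2 ≤ j) :
    Filter.Tendsto
      (fun N : ℕ =>
        (homCount (cycleGraph (4 * j))
            (disjointUnionCompletes n (fun i => ⌊(y i) ^ ((1 : ℝ) / 4) * N⌋₊ + 1)) : ℝ) /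
          (homCount (cycleGraph 4)
            (disjointUnionCompletes n (fun i => ⌊(y i) ^ ((1 : ℝ) / 4) * N⌋₊ + 1)) : ℝ) ^ j)
      Filter.atTop (nhds (∑ i, y i ^ j)) := by
  apply analMain y hy hsum j hj
  · intro N
    rw [homCount_4j j n (by omega) (fun i => ⌊(y i) ^ ((1 : ℝ) / 4) * N⌋₊)]
    push_cast
    rfl
  · intro N
    have h := homCount_4j 1 n le_rfl (fun i => ⌊(y i) ^ ((1 : ℝ) / 4) * N⌋₊)
    norm_num at h
    rw [h]
    push_cast
    rfl
end

section
/- The closure of the set of points ( hom(C_8;G)/hom(C_4;G)^2, hom(C_{12};G)/hom(C_4;G)^3, ..., hom(C_{4ℓ};G)/hom(C_4;G)^ℓ ) over all finite simple graphs G with hom(C_4;G) ≠ 0 equals the power-sum profile Π_ℓ, i.e., the closure of { (p_2(x),...,p_ℓ(x)) : x ∈ ℝ^n_{≥0} for some n, with p_1(x)=1 }. -/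
open SimpleGraph

/-- The power-sum profile `Π_ℓ`: the closure of all vectors `(p_2(x), …, p_ℓ(x))`
over nonnegative `x ∈ ℝ^n` (any `n`) with `p_1(x) = 1`. -/
def powerSumProfile (ℓ : ℕ) : Set (Fin (ℓ - 1) → ℝ) :=
  closure {v | ∃ (n : ℕ) (x : Fin n → ℝ), (∀ i, 0 ≤ x i) ∧ (∑ i, x i) = 1 ∧
    ∀ j : Fin (ℓ - 1), v j = ∑ i, x i ^ ((j : ℕ) + 2)}

open Matrix Finset Filter Topology

set_option linter.unusedSectionVars false
set_option linter.unusedVariables false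

namespace CRP


variable {V : Type*} [Fintype V] [DecidableEq V]

/-- Auxiliary: product of matrix entries along a walk `u, g 0, g 1, …, g (m-1)`,
with an indicator that the endpoint is `v`. -/
def walkProd (A : Matrix V V ℝ) : (m : ℕ) → V → (Fin m → V) → V → ℝ
  | 0, u, _, v => if u = v then 1 else 0
  | m + 1, u, g, v => A u (g 0) * walkProd A m (g 0) (Fin.tail g) v

lemma sum_walkProd (A : Matrix V V ℝ) : ∀ (m : ℕ) (u v : V),
    ∑ g : Fin m → V, walkProd A m u g v = (A ^ m) u v
  | 0, u, v => by
    simp [walkProd, Matrix.one_apply]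
  | m + 1, u, v => by
    have e1 : ∑ g : Fin (m + 1) → V, walkProd A (m + 1) u g v
        = ∑ p : V × (Fin m → V), A u p.1 * walkProd A m p.1 p.2 v :=
      Fintype.sum_equiv (Fin.consEquiv fun _ => V).symm
        (fun g => walkProd A (m + 1) u g v)
        (fun p => A u p.1 * walkProd A m p.1 p.2 v) (fun g => rfl)
    rw [e1, Fintype.sum_prod_type]
    simp only [← Finset.mul_sum]
    rw [pow_succ']
    rw [Matrix.mul_apply]
    exact Finset.sum_congr rfl fun w _ => by rw [sum_walkProd A m w v]

lemma walkProd_eq (A : Matrix V V ℝ) : ∀ (m : ℕ) (u : V) (g : Fin m → V) (v : V),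
    walkProd A m u g v =
      (∏ i : Fin m, A ((Fin.cons u g : Fin (m+1) → V) i.castSucc) (g i)) *
        (if (Fin.cons u g : Fin (m+1) → V) (Fin.last m) = v then 1 else 0)
  | 0, u, g, v => by
    simp [walkProd, Fin.last]
  | m + 1, u, g, v => by
    rw [walkProd, walkProd_eq A m (g 0) (Fin.tail g) v, Fin.cons_self_tail,
      ← mul_assoc]
    have h1 : (∏ i : Fin (m + 1), A ((Fin.cons u g : Fin (m+2) → V) i.castSucc) (g i))
        = A u (g 0) * ∏ i : Fin m, A (g i.castSucc) (g i.succ) := by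
      rw [Fin.prod_univ_succ]
      simp only [Fin.castSucc_zero, Fin.cons_zero]
      exact congrArg _ (Finset.prod_congr rfl fun i _ => by
        rw [← Fin.succ_castSucc, Fin.cons_succ])
    have h2 : (Fin.cons u g : Fin (m+2) → V) (Fin.last (m+1)) = g (Fin.last m) := by
      rw [← Fin.succ_last, Fin.cons_succ]
    rw [h1, h2]
    simp [Fin.tail]

lemma trace_pow (A : Matrix V V ℝ) (m : ℕ) :
    Matrix.trace (A ^ (m + 1)) =
      ∑ f : Fin (m + 1) → V, ∏ i : Fin (m + 1), A (f i) (f (i + 1)) := by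
  have key : ∀ (g : Fin (m + 1) → V) (u : V),
      walkProd A (m + 1) u g u =
        if g (Fin.last m) = u then ∏ i : Fin (m + 1), A ((Fin.cons u g : Fin (m+2) → V) i.castSucc) (g i)
        else 0 := by
    intro g u
    rw [walkProd_eq]
    have h : (Fin.cons u g : Fin (m+2) → V) (Fin.last (m + 1)) = g (Fin.last m) := by
      rw [← Fin.succ_last, Fin.cons_succ]
    rw [h, mul_ite, mul_one, mul_zero]
  calc Matrix.trace (A ^ (m + 1))
      = ∑ u : V, ∑ g : Fin (m + 1) → V, walkProd A (m + 1) u g u := by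
        rw [Matrix.trace]
        exact Finset.sum_congr rfl fun u _ => by
          rw [Matrix.diag_apply, ← sum_walkProd A (m + 1) u u]
    _ = ∑ g : Fin (m + 1) → V, ∑ u : V,
          (if g (Fin.last m) = u then
            ∏ i : Fin (m + 1), A ((Fin.cons u g : Fin (m+2) → V) i.castSucc) (g i) else 0) := by
        rw [Finset.sum_comm]
        exact Finset.sum_congr rfl fun g _ => Finset.sum_congr rfl fun u _ => key g u
    _ = ∑ g : Fin (m + 1) → V,
          ∏ i : Fin (m + 1), A ((Fin.cons (g (Fin.last m)) g : Fin (m+2) → V) i.castSucc) (g i) := by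
        exact Finset.sum_congr rfl fun g _ => by rw [Finset.sum_ite_eq]; simp
    _ = ∑ f : Fin (m + 1) → V, ∏ i : Fin (m + 1), A (f i) (f (i + 1)) := by
        refine (Fintype.sum_bijective (fun f : Fin (m + 1) → V => fun i => f (i + 1))
          ((Equiv.arrowCongr (Equiv.addRight (1 : Fin (m + 1))) (Equiv.refl V)).symm.bijective)
          _ _ ?_).symm
        intro f
        have hlast : f (Fin.last m + 1) = f 0 := by rw [Fin.last_add_one]
        have hcons : ∀ i : Fin (m + 1),
            (Fin.cons (f 0) (fun j : Fin (m + 1) => f (j + 1)) : Fin (m+2) → V) i.castSucc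
              = f i := by
          intro i
          induction i using Fin.cases with
          | zero => simp
          | succ j =>
            rw [← Fin.succ_castSucc, Fin.cons_succ]
            simp only [Fin.coeSucc_eq_succ]
        simp only [hlast]
        exact Finset.prod_congr rfl fun i _ => by rw [hcons i]


variable {V : Type*} [Fintype V] [DecidableEq V]

/-- Homs from a cycle correspond to cyclically adjacent vertex functions. -/
def homEquiv (G : SimpleGraph V) (m : ℕ) :
    (cycleGraph (m + 3) →g G) ≃ {f : Fin (m + 3) → V // ∀ i, G.Adj (f i) (f (i + 1))} where
  toFun φ := ⟨φ, fun i => φ.map_adj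
    ((cycleGraph_adj (n := m + 1) (u := i) (v := i + 1)).mpr
      (Or.inr (by rw [add_sub_cancel_left])))⟩
  invFun p := ⟨p.1, by
    intro u v h
    have h' := (cycleGraph_adj (n := m + 1) (u := u) (v := v)).mp h
    rcases h' with h' | h'
    · have : u = v + 1 := by rw [← h', add_sub_cancel]
      rw [this]
      exact (p.2 v).symm
    · have : v = u + 1 := by rw [← h', add_sub_cancel]
      rw [this]
      exact p.2 u⟩
  left_inv φ := rfl
  right_inv p := rfl

omit [DecidableEq V] in
lemma homCount_cycle_card (G : SimpleGraph V) [DecidableRel G.Adj] (m : ℕ) :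
    homCount (cycleGraph (m + 3)) G
      = Fintype.card {f : Fin (m + 3) → V // ∀ i, G.Adj (f i) (f (i + 1))} := by
  rw [homCount, Nat.card_congr (homEquiv G m), Nat.card_eq_fintype_card]

lemma homCount_cycle_eq_trace (G : SimpleGraph V) [DecidableRel G.Adj] {m : ℕ} (hm : 3 ≤ m) :
    (homCount (cycleGraph m) G : ℝ) = Matrix.trace ((G.adjMatrix ℝ) ^ m) := by
  obtain ⟨k, rfl⟩ : ∃ k, m = k + 3 := ⟨m - 3, by omega⟩
  have h1 : ∀ f : Fin (k + 3) → V,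
      (∏ i : Fin (k + 3), (G.adjMatrix ℝ) (f i) (f (i + 1)))
        = if ∀ i, G.Adj (f i) (f (i + 1)) then (1:ℝ) else 0 := by
    intro f
    by_cases h : ∀ i, G.Adj (f i) (f (i + 1))
    · rw [if_pos h]
      exact Finset.prod_eq_one fun i _ => by rw [adjMatrix_apply, if_pos (h i)]
    · rw [if_neg h]
      push_neg at h
      obtain ⟨i, hi⟩ := h
      exact Finset.prod_eq_zero (Finset.mem_univ i) (by rw [adjMatrix_apply, if_neg hi])
  have h2 : (∑ f : Fin (k + 3) → V, ∏ i : Fin (k + 3), (G.adjMatrix ℝ) (f i) (f (i + 1)))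
      = ((Finset.univ.filter fun f : Fin (k + 3) → V =>
          ∀ i, G.Adj (f i) (f (i + 1))).card : ℝ) := by
    rw [Finset.sum_congr rfl fun f _ => h1 f, Finset.sum_boole]
  have h3 : Matrix.trace ((G.adjMatrix ℝ) ^ (k + 3))
      = ∑ f : Fin (k + 3) → V, ∏ i : Fin (k + 3), (G.adjMatrix ℝ) (f i) (f (i + 1)) :=
    trace_pow (G.adjMatrix ℝ) (k + 2)
  rw [h3, h2, homCount_cycle_card G k, Fintype.card_subtype]


variable {V : Type*} [Fintype V] [DecidableEq V]

lemma trace_pow_eq_sum_eigenvalues (A : Matrix V V ℝ) (hA : A.IsHermitian) (m : ℕ) :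
    Matrix.trace (A ^ m) = ∑ i, hA.eigenvalues i ^ m := by
  set U : Matrix V V ℝ := (Matrix.IsHermitian.eigenvectorUnitary hA : Matrix V V ℝ) with hU
  set D : Matrix V V ℝ := Matrix.diagonal (RCLike.ofReal ∘ hA.eigenvalues) with hD
  have hUU : U * star U = 1 :=
    (Matrix.mem_unitaryGroup_iff).mp (Matrix.IsHermitian.eigenvectorUnitary hA).2
  have hUU' : star U * U = 1 :=
    (Matrix.mem_unitaryGroup_iff').mp (Matrix.IsHermitian.eigenvectorUnitary hA).2
  have key : ∀ B C : Matrix V V ℝ, (U * B * star U) * (U * C * star U) = U * (B * C) * star U := by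
    intro B C
    calc (U * B * star U) * (U * C * star U) = U * B * (star U * U) * C * star U := by
          simp only [Matrix.mul_assoc]
      _ = U * (B * C) * star U := by
          rw [hUU', Matrix.mul_one]
          simp only [Matrix.mul_assoc]
  have hpow : ∀ k : ℕ, A ^ k = U * D ^ k * star U := by
    intro k
    induction k with
    | zero => simp [hUU]
    | succ k ih =>
      have hs : A = U * D * star U := hA.spectral_theorem
      rw [pow_succ, ih, hs, key, ← pow_succ]
  rw [hpow m, Matrix.trace_mul_cycle, hUU', Matrix.one_mul,
    Matrix.diagonal_pow, Matrix.trace_diagonal]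
  simp


/-- Hom counts of cycles into complete graphs. -/
lemma homCount_cycle_top (s : ℕ) {m : ℕ} (hm : 3 ≤ m) :
    (homCount (cycleGraph m) (⊤ : SimpleGraph (Fin s)) : ℝ)
      = ((s : ℝ) - 1) ^ m + (-1) ^ m * ((s : ℝ) - 1) := by
  set J : Matrix (Fin s) (Fin s) ℝ := Matrix.of (fun _ _ => 1) with hJ
  set A : Matrix (Fin s) (Fin s) ℝ := (⊤ : SimpleGraph (Fin s)).adjMatrix ℝ with hA
  have hJJ : J * J = (s : ℝ) • J := by
    ext u v
    simp [hJ, Matrix.mul_apply]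
  have hAJ : A = J - 1 := by
    ext u v
    by_cases h : u = v
    · subst h; simp [hA, hJ, Matrix.one_apply]
    · simp [hA, hJ, Matrix.one_apply, h, adjMatrix_apply, Ne.symm h]
  have key : ∀ k : ℕ, ∃ a : ℝ, A ^ k = a • J + ((-1 : ℝ) ^ k) • 1 ∧
      a * s = ((s : ℝ) - 1) ^ k - (-1) ^ k := by
    intro k
    induction k with
    | zero => exact ⟨0, by simp, by simp⟩
    | succ k ih =>
      obtain ⟨a, hAk, has⟩ := ih
      refine ⟨a * ((s : ℝ) - 1) + (-1) ^ k, ?_, ?_⟩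
      · rw [pow_succ, hAk, hAJ]
        rw [Matrix.add_mul, Matrix.smul_mul, Matrix.smul_mul, Matrix.mul_sub, Matrix.mul_sub,
          hJJ, Matrix.mul_one, Matrix.one_mul]
        rw [smul_sub, smul_sub, smul_smul, pow_succ (-1:ℝ) k, Matrix.one_mul]
        module
      · have : (a * ((s:ℝ) - 1) + (-1) ^ k) * s = (a * s) * ((s:ℝ) - 1) + (-1) ^ k * s := by ring
        rw [this, has]
        ring
  obtain ⟨a, hAk, has⟩ := key m
  rw [homCount_cycle_eq_trace _ hm, ← hA, hAk]
  have hTrJ : Matrix.trace J = (s : ℝ) := by simp [hJ, Matrix.trace]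
  rw [Matrix.trace_add, Matrix.trace_smul, Matrix.trace_smul, hTrJ, Matrix.trace_one]
  simp only [smul_eq_mul]
  rw [Fintype.card_fin]
  nlinarith [has]


/-- Disjoint union of cliques of sizes `c i`. -/
def cliqueUnion (n : ℕ) (c : Fin n → ℕ) : SimpleGraph (Σ i : Fin n, Fin (c i)) where
  Adj a b := a.1 = b.1 ∧ a ≠ b
  symm := ⟨fun a b h => ⟨h.1.symm, h.2.symm⟩⟩
  loopless := ⟨fun a h => h.2 rfl⟩

instance (n : ℕ) (c : Fin n → ℕ) : DecidableRel (cliqueUnion n c).Adj := fun a b =>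
  inferInstanceAs (Decidable (a.1 = b.1 ∧ a ≠ b))

lemma sigma_ext_iff' {n : ℕ} {c : Fin n → ℕ} {a b : Σ i : Fin n, Fin (c i)} :
    a = b ↔ a.1 = b.1 ∧ (a.2 : ℕ) = (b.2 : ℕ) := by
  constructor
  · rintro rfl; exact ⟨rfl, rfl⟩
  · obtain ⟨i, x⟩ := a
    obtain ⟨j, y⟩ := b
    rintro ⟨h1, h2⟩
    dsimp at h1 h2
    subst h1
    simp [Fin.ext_iff, h2]

section
variable {n : ℕ} {c : Fin n → ℕ} {m : ℕ}

lemma first_const (f : Fin (m + 3) → Σ i : Fin n, Fin (c i))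
    (hf : ∀ k, (cliqueUnion n c).Adj (f k) (f (k + 1))) :
    ∀ k, (f k).1 = (f 0).1 := by
  have step : ∀ j : ℕ, ∀ hj : j < m + 3, (f ⟨j, hj⟩).1 = (f 0).1 := by
    intro j
    induction j with
    | zero => intro hj; rfl
    | succ j ih =>
      intro hj
      have hj' : j < m + 3 := Nat.lt_of_succ_lt hj
      have heq : (⟨j + 1, hj⟩ : Fin (m + 3)) = ⟨j, hj'⟩ + 1 := by
        rw [Fin.ext_iff]
        simp [Fin.add_def, Nat.mod_eq_of_lt hj]
      rw [heq, ← (hf ⟨j, hj'⟩).1]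
      exact ih hj'
  intro k
  exact step k.val k.isLt

/-- Cyclically-adjacent maps into a union of cliques split over cliques. -/
def splitEquiv (n : ℕ) (c : Fin n → ℕ) (m : ℕ) :
    {f : Fin (m + 3) → Σ i : Fin n, Fin (c i) //
        ∀ k, (cliqueUnion n c).Adj (f k) (f (k + 1))}
      ≃ Σ i : Fin n, {g : Fin (m + 3) → Fin (c i) //
          ∀ k, (⊤ : SimpleGraph (Fin (c i))).Adj (g k) (g (k + 1))} where
  toFun p :=
    ⟨(p.1 0).1,
     fun k => ⟨(p.1 k).2.val, by rw [← first_const p.1 p.2 k]; exact (p.1 k).2.isLt⟩,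
     by
      intro k
      rw [top_adj]
      intro h
      have hvals : ((p.1 k).2 : ℕ) = ((p.1 (k + 1)).2 : ℕ) := congrArg Fin.val h
      exact (p.2 k).2 (sigma_ext_iff'.mpr ⟨(p.2 k).1, hvals⟩)⟩
  invFun q :=
    ⟨fun k => ⟨q.1, q.2.1 k⟩, by
      intro k
      refine ⟨rfl, fun h => ?_⟩
      have := (sigma_ext_iff'.mp h).2
      exact ((top_adj _ _).mp (q.2.2 k)) (Fin.ext this)⟩
  left_inv p := by
    apply Subtype.ext
    funext k
    apply sigma_ext_iff'.mpr
    exact ⟨(first_const p.1 p.2 k).symm, rfl⟩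
  right_inv q := by
    obtain ⟨i, g, hg⟩ := q
    refine Sigma.ext rfl (heq_of_eq ?_)
    apply Subtype.ext
    funext k
    exact Fin.ext rfl

lemma homCount_cliqueUnion :
    homCount (cycleGraph (m + 3)) (cliqueUnion n c)
      = ∑ i : Fin n, homCount (cycleGraph (m + 3)) (⊤ : SimpleGraph (Fin (c i))) := by
  rw [homCount_cycle_card (cliqueUnion n c) m, Fintype.card_congr (splitEquiv n c m),
    Fintype.card_sigma]
  exact Finset.sum_congr rfl fun i _ => (homCount_cycle_card _ m).symm

end


lemma graph_point_mem (ℓ : ℕ) {v : Fin (ℓ - 1) → ℝ} (V : Type) [Fintype V]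
    (G : SimpleGraph V) (hne : homCount (cycleGraph 4) G ≠ 0)
    (hv : ∀ j : Fin (ℓ - 1), v j =
      (homCount (cycleGraph (4 * ((j : ℕ) + 2))) G : ℝ) /
        (homCount (cycleGraph 4) G : ℝ) ^ ((j : ℕ) + 2)) :
    ∃ (n : ℕ) (x : Fin n → ℝ), (∀ i, 0 ≤ x i) ∧ (∑ i, x i) = 1 ∧
      ∀ j : Fin (ℓ - 1), v j = ∑ i, x i ^ ((j : ℕ) + 2) := by
  classical
  have hA : (G.adjMatrix ℝ).IsHermitian := by
    rw [Matrix.IsHermitian, Matrix.conjTranspose_eq_transpose_of_trivial]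
    exact G.isSymm_adjMatrix
  set lam : V → ℝ := hA.eigenvalues with hlam
  set T : ℝ := (homCount (cycleGraph 4) G : ℝ) with hTdef
  have hT4 : T = ∑ w, lam w ^ 4 := by
    rw [hTdef, homCount_cycle_eq_trace G (by norm_num), trace_pow_eq_sum_eigenvalues _ hA]
  have hTpos : 0 < T := by
    rw [hTdef]
    exact_mod_cast Nat.pos_of_ne_zero hne
  set n : ℕ := Fintype.card V with hn
  set e : Fin n ≃ V := (Fintype.equivFin V).symm with he
  refine ⟨n, fun i => lam (e i) ^ 4 / T, fun i => by positivity, ?_, ?_⟩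
  · rw [← Finset.sum_div, Equiv.sum_comp e (fun w => lam w ^ 4), ← hT4,
      div_self (ne_of_gt hTpos)]
  · intro j
    have h1 : ∀ i : Fin n, (lam (e i) ^ 4 / T) ^ ((j : ℕ) + 2)
        = lam (e i) ^ (4 * ((j : ℕ) + 2)) / T ^ ((j : ℕ) + 2) := by
      intro i
      rw [div_pow, ← pow_mul]
    rw [Finset.sum_congr rfl fun i _ => h1 i, ← Finset.sum_div,
      Equiv.sum_comp e (fun w => lam w ^ (4 * ((j : ℕ) + 2))), hv j]
    congr 1
    rw [homCount_cycle_eq_trace G (by omega), trace_pow_eq_sum_eigenvalues _ hA]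


/-- hom count of an even cycle into a union of cliques of sizes `d i + 1`. -/
lemma homCount_cliqueUnion_real (n : ℕ) (d : Fin n → ℕ) {m : ℕ} (hm : 3 ≤ m) (hme : Even m) :
    (homCount (cycleGraph m) (cliqueUnion n (fun i => d i + 1)) : ℝ)
      = ∑ i : Fin n, ((d i : ℝ) ^ m + (d i : ℝ)) := by
  obtain ⟨k, rfl⟩ : ∃ k, m = k + 3 := ⟨m - 3, by omega⟩
  rw [homCount_cliqueUnion]
  push_cast
  refine Finset.sum_congr rfl fun i _ => ?_
  rw [homCount_cycle_top _ hm, hme.neg_one_pow]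
  push_cast
  ring

lemma div_div_div_same (a b c : ℝ) (hc : c ≠ 0) : (a / c) / (b / c) = a / b := by
  rcases eq_or_ne b 0 with rfl | hb
  · simp
  · field_simp

/-- The power-sum point of a normalized nonnegative vector lies in the closure of the
cycle-ratio graph points. -/
lemma powerPoint_mem_closure (ℓ : ℕ) (n : ℕ) (x : Fin n → ℝ)
    (hx0 : ∀ i, 0 ≤ x i) (hx1 : (∑ i, x i) = 1) :
    (fun j : Fin (ℓ - 1) => ∑ i, x i ^ ((j : ℕ) + 2)) ∈
      closure {v : Fin (ℓ - 1) → ℝ | ∃ (V : Type) (_ : Fintype V) (G : SimpleGraph V),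
        homCount (cycleGraph 4) G ≠ 0 ∧
        ∀ j : Fin (ℓ - 1), v j =
          (homCount (cycleGraph (4 * ((j : ℕ) + 2))) G : ℝ) /
            (homCount (cycleGraph 4) G : ℝ) ^ ((j : ℕ) + 2)} := by
  classical
  set t : Fin n → ℝ := fun i => x i ^ ((4 : ℝ)⁻¹) with ht
  have ht0 : ∀ i, 0 ≤ t i := fun i => Real.rpow_nonneg (hx0 i) _
  have ht4 : ∀ i, t i ^ (4 : ℕ) = x i := by
    intro i
    have := Real.rpow_inv_natCast_pow (hx0 i) (n := 4) (by norm_num)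
    simpa using this
  set d : ℕ → Fin n → ℕ := fun N i => ⌊t i * (N : ℝ)⌋₊ with hd
  -- hom counts
  have hhom : ∀ (N : ℕ) {m : ℕ}, 3 ≤ m → Even m →
      (homCount (cycleGraph m) (cliqueUnion n (fun i => d N i + 1)) : ℝ) = ∑ i : Fin n, ((d N i : ℝ) ^ m + (d N i : ℝ)) :=
    fun N m hm hme => homCount_cliqueUnion_real n (d N) hm hme
  -- there is a positive coordinate
  obtain ⟨i0, hi0⟩ : ∃ i0, 0 < x i0 := by
    by_contra h
    push_neg at h
    have : (∑ i, x i) ≤ 0 := Finset.sum_nonpos fun i _ => h i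
    rw [hx1] at this; linarith
  have hti0 : 0 < t i0 := Real.rpow_pos_of_pos hi0 _
  -- eventually d N i0 ≥ 1
  have hev : ∀ᶠ N : ℕ in atTop, 1 ≤ d N i0 := by
    have h1 : Tendsto (fun N : ℕ => t i0 * (N : ℝ)) atTop atTop :=
      (Tendsto.const_mul_atTop hti0 tendsto_id).comp tendsto_natCast_atTop_atTop
    filter_upwards [h1.eventually_ge_atTop 1] with N hN
    exact Nat.le_floor (by exact_mod_cast hN)
  -- nonzero hom count of C4
  have hne : ∀ N : ℕ, 1 ≤ d N i0 → homCount (cycleGraph 4) (cliqueUnion n (fun i => d N i + 1)) ≠ 0 := by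
    intro N hN
    have hpos : (0 : ℝ) < (homCount (cycleGraph 4) (cliqueUnion n (fun i => d N i + 1)) : ℝ) := by
      rw [hhom N (by norm_num) (by decide)]
      have hterm : (1 : ℝ) ≤ (d N i0 : ℝ) ^ 4 + (d N i0 : ℝ) := by
        have h1 : (1 : ℝ) ≤ (d N i0 : ℝ) := by exact_mod_cast hN
        have h2 : (0 : ℝ) ≤ (d N i0 : ℝ) ^ 4 := by positivity
        linarith
      have h3 : ((d N i0 : ℝ) ^ 4 + (d N i0 : ℝ))
          ≤ ∑ i : Fin n, ((d N i : ℝ) ^ 4 + (d N i : ℝ)) :=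
        Finset.single_le_sum (f := fun i => (d N i : ℝ) ^ 4 + (d N i : ℝ))
          (fun i _ => by positivity) (Finset.mem_univ i0)
      linarith
    intro h
    rw [h] at hpos
    simp at hpos
  -- basic limit : d N i / N → t i
  have hdiv : ∀ i, Tendsto (fun N : ℕ => (d N i : ℝ) / (N : ℝ)) atTop (𝓝 (t i)) := by
    intro i
    exact (tendsto_nat_floor_mul_div_atTop (ht0 i)).comp tendsto_natCast_atTop_atTop
  -- scaled sums
  have hsum : ∀ p : ℕ, 1 ≤ p →
      Tendsto (fun N : ℕ => (∑ i : Fin n, ((d N i : ℝ) ^ (4 * p) + (d N i : ℝ))) / (N : ℝ) ^ (4 * p))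
        atTop (𝓝 (∑ i, x i ^ p)) := by
    intro p hp
    have hterm : ∀ i : Fin n,
        Tendsto (fun N : ℕ => ((d N i : ℝ) ^ (4 * p) + (d N i : ℝ)) / (N : ℝ) ^ (4 * p))
          atTop (𝓝 (x i ^ p)) := by
      intro i
      have h1 : Tendsto (fun N : ℕ => ((d N i : ℝ) / (N : ℝ)) ^ (4 * p))
          atTop (𝓝 ((t i) ^ (4 * p))) := (hdiv i).pow _
      have h1' : (t i) ^ (4 * p) = x i ^ p := by
        rw [pow_mul, ht4 i]
      have h2 : Tendsto (fun N : ℕ => (d N i : ℝ) / (N : ℝ) / (N : ℝ) ^ (4 * p - 1))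
          atTop (𝓝 0) := by
        apply Filter.Tendsto.div_atTop (hdiv i)
        exact (tendsto_pow_atTop (by omega : 4 * p - 1 ≠ 0)).comp tendsto_natCast_atTop_atTop
      have heq : ∀ᶠ N : ℕ in atTop,
          ((d N i : ℝ) / (N : ℝ)) ^ (4 * p) + (d N i : ℝ) / (N : ℝ) / (N : ℝ) ^ (4 * p - 1)
            = ((d N i : ℝ) ^ (4 * p) + (d N i : ℝ)) / (N : ℝ) ^ (4 * p) := by
        filter_upwards [eventually_ge_atTop 1] with N hN
        have hN0 : (N : ℝ) ≠ 0 := Nat.cast_ne_zero.mpr (by omega)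
        have h4p : 4 * p = (4 * p - 1) + 1 := by omega
        rw [add_div, div_pow, div_div, ← pow_succ', ← h4p]
      have hcomb := h1.add h2
      rw [add_zero, h1'] at hcomb
      exact Tendsto.congr' heq hcomb
    have hfun : (fun N : ℕ =>
        (∑ i : Fin n, ((d N i : ℝ) ^ (4 * p) + (d N i : ℝ))) / (N : ℝ) ^ (4 * p))
        = fun N : ℕ => ∑ i : Fin n, ((d N i : ℝ) ^ (4 * p) + (d N i : ℝ)) / (N : ℝ) ^ (4 * p) := by
      funext N
      rw [Finset.sum_div]
    rw [hfun]
    exact tendsto_finset_sum _ fun i _ => hterm i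
  -- the sequence of graph ratio points
  set vN : ℕ → Fin (ℓ - 1) → ℝ := fun N j =>
    (homCount (cycleGraph (4 * ((j : ℕ) + 2))) (cliqueUnion n (fun i => d N i + 1)) : ℝ) /
      (homCount (cycleGraph 4) (cliqueUnion n (fun i => d N i + 1)) : ℝ) ^ ((j : ℕ) + 2) with hvN
  have hS : Tendsto (fun N : ℕ => (∑ i : Fin n, ((d N i : ℝ) ^ 4 + (d N i : ℝ))) / (N : ℝ) ^ 4)
      atTop (𝓝 1) := by
    have := hsum 1 le_rfl
    simp only [mul_one, pow_one] at this
    rwa [hx1] at this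
  have hmem : ∀ᶠ N : ℕ in atTop, vN N ∈ {v : Fin (ℓ - 1) → ℝ |
      ∃ (V : Type) (_ : Fintype V) (G : SimpleGraph V),
        homCount (cycleGraph 4) G ≠ 0 ∧
        ∀ j : Fin (ℓ - 1), v j =
          (homCount (cycleGraph (4 * ((j : ℕ) + 2))) G : ℝ) /
            (homCount (cycleGraph 4) G : ℝ) ^ ((j : ℕ) + 2)} := by
    filter_upwards [hev] with N hN
    exact ⟨(i : Fin n) × Fin (d N i + 1), inferInstance,
      cliqueUnion n (fun i => d N i + 1), hne N hN, fun j => rfl⟩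
  have htend : Tendsto vN atTop
      (𝓝 (fun j : Fin (ℓ - 1) => ∑ i, x i ^ ((j : ℕ) + 2))) := by
    rw [tendsto_pi_nhds]
    intro j
    set p : ℕ := (j : ℕ) + 2 with hpdef
    have hp : 1 ≤ p := by omega
    have hA := hsum p hp
    have hcomb := hA.div (hS.pow p) (by norm_num : (1 : ℝ) ^ p ≠ 0)
    rw [one_pow, div_one] at hcomb
    refine Tendsto.congr' ?_ hcomb
    filter_upwards [eventually_ge_atTop 1] with N hN1
    have hN0 : (N : ℝ) ≠ 0 := Nat.cast_ne_zero.mpr (by omega)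
    have hNp : ((N : ℝ)) ^ (4 * p) ≠ 0 := pow_ne_zero _ hN0
    have e4 : (homCount (cycleGraph 4) (cliqueUnion n fun i => d N i + 1) : ℝ)
        = ∑ i : Fin n, ((d N i : ℝ) ^ 4 + (d N i : ℝ)) := by
      have := hhom N (m := 4) (by norm_num) (by decide)
      simpa using this
    have ep : (homCount (cycleGraph (4 * p)) (cliqueUnion n fun i => d N i + 1) : ℝ)
        = ∑ i : Fin n, ((d N i : ℝ) ^ (4 * p) + (d N i : ℝ)) :=
      hhom N (by omega) ⟨2 * p, by ring⟩
    show _ = vN N j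
    rw [hvN]
    simp only []
    simp only [Pi.div_apply, ← hpdef]
    rw [e4, ep, div_pow, ← pow_mul]
    exact div_div_div_same _ _ _ hNp
  exact mem_closure_of_tendsto htend hmem

end CRP

/-- The cycle ratio profile: the closure of the points
`(hom(C_8;G)/hom(C_4;G)^2, …, hom(C_{4ℓ};G)/hom(C_4;G)^ℓ)` over all finite simple graphs `G`
with `hom(C_4;G) ≠ 0` equals the power-sum profile `Π_ℓ`. -/
theorem cycle_ratio_profile_eq_powerSumProfile (ℓ : ℕ) (hℓ : 2 ≤ ℓ) :
    closure {v : Fin (ℓ - 1) → ℝ | ∃ (V : Type) (_ : Fintype V) (G : SimpleGraph V),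
        homCount (cycleGraph 4) G ≠ 0 ∧
        ∀ j : Fin (ℓ - 1), v j =
          (homCount (cycleGraph (4 * ((j : ℕ) + 2))) G : ℝ) /
            (homCount (cycleGraph 4) G : ℝ) ^ ((j : ℕ) + 2)} = powerSumProfile ℓ := by
  apply Set.Subset.antisymm
  · apply closure_minimal _ isClosed_closure
    rintro v ⟨V, hV, G, hne, hv⟩
    haveI := hV
    apply subset_closure
    exact CRP.graph_point_mem ℓ V G hne hv
  · rw [powerSumProfile]
    apply closure_minimal _ isClosed_closure
    rintro v ⟨n, x, hx0, hx1, hvj⟩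
    have hveq : v = fun j : Fin (ℓ - 1) => ∑ i, x i ^ ((j : ℕ) + 2) := funext hvj
    rw [hveq]
    exact CRP.powerPoint_mem_closure ℓ n x hx0 hx1
end

section
/- The hyperstar ratio profile equals the power-sum profile: the closure of the set of points ( hom(S^(k)_{2k};G)/hom(S^(k)_k;G)^2, ..., hom(S^(k)_{ℓk};G)/hom(S^(k)_k;G)^ℓ ) over all k-uniform hypergraphs G with hom(S^(k)_k;G) ≠ 0 equals Π_ℓ. -/
/-- The edge set of the `k`-uniform hyperstar with `b` branches: `b` hyperedges of size `k`
all sharing the single center vertex `none` and otherwise disjoint. -/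
def hyperstarEdges (k b : ℕ) : Finset (Finset (Option (Fin b × Fin (k - 1)))) :=
  Finset.image (fun t : Fin b =>
    insert none ((Finset.univ : Finset (Fin (k - 1))).image (fun s => some (t, s))))
    Finset.univ

/-- The number of homomorphisms between hypergraphs given by their edge sets: maps of
vertices sending (the image of) every hyperedge of the source onto a hyperedge of the
target. -/
noncomputable def hypHomCount {VH VG : Type*} [DecidableEq VG]
    (EH : Finset (Finset VH)) (EG : Finset (Finset VG)) : ℕ :=
  Nat.card {f : VH → VG // ∀ e ∈ EH, e.image f ∈ EG}

namespace HSP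
open Finset Filter Topology

variable {V : Type*} [Fintype V] [DecidableEq V]

def deg (E : Finset (Finset V)) (v : V) : ℕ := (E.filter (fun e => v ∈ e)).card

noncomputable def exactImageEquiv {α : Type*} [Fintype α] [DecidableEq α] (s : Finset V)
    (hs : s.card = Fintype.card α) :
    {g : α → V // Finset.image g Finset.univ = s} ≃ (α ≃ s) where
  toFun := fun g => Equiv.ofBijective
    (fun a => ⟨g.1 a, by
      have h0 := Finset.mem_image_of_mem g.1 (Finset.mem_univ a); rwa [g.2] at h0⟩)
    (by
      have hinj : Function.Injective g.1 := by
        have h1 : (Finset.univ.image g.1).card = (Finset.univ : Finset α).card := by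
          rw [g.2, hs, Finset.card_univ]
        have h2 := Finset.injOn_of_card_image_eq h1
        intro a b hab
        exact h2 (Finset.mem_univ a) (Finset.mem_univ b) hab
      rw [Fintype.bijective_iff_injective_and_card]
      refine ⟨fun a b hab => hinj (congrArg Subtype.val hab), ?_⟩
      simp [Fintype.card_coe, hs])
  invFun := fun φ => ⟨fun a => (φ a : V), by
    ext b
    simp only [Finset.mem_image, Finset.mem_univ, true_and]
    constructor
    · rintro ⟨a, rfl⟩; exact (φ a).2
    · intro hb; exact ⟨φ.symm ⟨b, hb⟩, by simp⟩⟩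
  left_inv := fun g => Subtype.ext rfl
  right_inv := fun φ => Equiv.ext fun a => Subtype.ext rfl

lemma card_fiber (k : ℕ) (hk : 2 ≤ k) (e : Finset V) (he : e.card = k) (v : V) (hv : v ∈ e) :
    (Finset.univ.filter (fun g : Fin (k-1) → V =>
      insert v (Finset.image g Finset.univ) = e)).card = Nat.factorial (k-1) := by
  have hcond : ∀ g : Fin (k-1) → V,
      (insert v (Finset.image g Finset.univ) = e) ↔ Finset.image g Finset.univ = e.erase v := by
    intro g
    constructor
    · intro h
      have hvim : v ∉ Finset.image g Finset.univ := by
        intro hvin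
        have h3 : Finset.image g Finset.univ = e := by
          rw [← h, Finset.insert_eq_self.mpr hvin]
        have hle := Finset.card_image_le (f := g) (s := (Finset.univ : Finset (Fin (k-1))))
        rw [h3, he, Finset.card_univ, Fintype.card_fin] at hle
        omega
      rw [← h, Finset.erase_insert hvim]
    · intro h; rw [h, Finset.insert_erase hv]
  have hs : (e.erase v).card = Fintype.card (Fin (k-1)) := by
    rw [Finset.card_erase_of_mem hv, he, Fintype.card_fin]
  calc (Finset.univ.filter (fun g : Fin (k-1) → V =>
      insert v (Finset.image g Finset.univ) = e)).card
      = (Finset.univ.filter (fun g : Fin (k-1) → V =>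
        Finset.image g Finset.univ = e.erase v)).card := by
        apply Finset.card_bij (fun g _ => g) <;> simp [hcond]
    _ = Fintype.card {g : Fin (k-1) → V // Finset.image g Finset.univ = e.erase v} :=
        (Fintype.card_subtype _).symm
    _ = Nat.factorial (k-1) := by
        rw [Fintype.card_congr (exactImageEquiv _ hs),
          Fintype.card_equiv (Fintype.equivOfCardEq
            (by rw [Fintype.card_coe]; exact hs.symm) : Fin (k-1) ≃ (e.erase v)),
          Fintype.card_fin]

lemma card_branch (k : ℕ) (hk : 2 ≤ k) (E : Finset (Finset V)) (hE : ∀ e ∈ E, e.card = k)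
    (v : V) :
    Fintype.card {g : Fin (k-1) → V // insert v (Finset.image g Finset.univ) ∈ E}
      = Nat.factorial (k-1) * deg E v := by
  rw [Fintype.card_subtype]
  rw [Finset.card_eq_sum_card_fiberwise
    (f := fun g : Fin (k-1) → V => insert v (Finset.image g Finset.univ)) (t := E)
    (s := Finset.univ.filter fun g : Fin (k-1) → V => insert v (Finset.image g Finset.univ) ∈ E)
    (fun g hg => Finset.mem_coe.mpr (Finset.mem_filter.mp (Finset.mem_coe.mp hg)).2)]
  have key : ∀ e ∈ E, ((Finset.univ.filter fun g : Fin (k-1) → V =>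
      insert v (Finset.image g Finset.univ) ∈ E).filter
      (fun g => insert v (Finset.image g Finset.univ) = e)).card
      = if v ∈ e then Nat.factorial (k-1) else 0 := by
    intro e he
    rw [Finset.filter_filter]
    split_ifs with hv
    · rw [Finset.filter_congr (q := fun g : Fin (k-1) → V =>
          insert v (Finset.image g Finset.univ) = e)
          (fun g _ => ⟨And.right, fun h => ⟨h ▸ he, h⟩⟩)]
      exact card_fiber k hk e (hE e he) v hv
    · rw [Finset.card_eq_zero, Finset.filter_eq_empty_iff]
      rintro g - ⟨-, h⟩
      exact hv (h ▸ Finset.mem_insert_self v _)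
  rw [Finset.sum_congr rfl key, Finset.sum_ite, Finset.sum_const_zero, add_zero,
    Finset.sum_const, smul_eq_mul, deg, mul_comm]

noncomputable def starEquiv (k b : ℕ) (E : Finset (Finset V)) :
    {f : Option (Fin b × Fin (k-1)) → V // ∀ e ∈ hyperstarEdges k b, e.image f ∈ E} ≃
      Σ v : V, (Fin b → {g : Fin (k-1) → V // insert v (Finset.image g Finset.univ) ∈ E}) where
  toFun := fun f => ⟨f.1 none, fun t => ⟨fun s => f.1 (some (t, s)), by
    have h := f.2 _ (Finset.mem_image_of_mem _ (Finset.mem_univ t))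
    rwa [Finset.image_insert, Finset.image_image] at h⟩⟩
  invFun := fun p => ⟨fun o => o.elim p.1 (fun q => (p.2 q.1).1 q.2), by
    intro e he
    obtain ⟨t, -, rfl⟩ := Finset.mem_image.mp he
    rw [Finset.image_insert, Finset.image_image]
    exact (p.2 t).2⟩
  left_inv := fun f => Subtype.ext (funext fun o => by cases o <;> rfl)
  right_inv := fun p => rfl

lemma hom_formula (k b : ℕ) (hk : 2 ≤ k) (E : Finset (Finset V)) (hE : ∀ e ∈ E, e.card = k) :
    hypHomCount (hyperstarEdges k b) E = ∑ v : V, (Nat.factorial (k-1) * deg E v) ^ b := by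
  unfold hypHomCount
  rw [Nat.card_congr (starEquiv k b E), Nat.card_eq_fintype_card, Fintype.card_sigma]
  refine Finset.sum_congr rfl fun v _ => ?_
  rw [Fintype.card_fun, card_branch k hk E hE v, Fintype.card_fin]

end HSP

namespace HSP
open Finset Filter Topology

variable (k n : ℕ) (a : Fin n → ℕ)

abbrev FlowerV : Type := Fin n ⊕ ((i : Fin n) × (Fin (a i) × Fin (k-1)))

def flowerEdge (p : (i : Fin n) × Fin (a i)) : Finset (FlowerV k n a) :=
  insert (Sum.inl p.1)
    ((Finset.univ : Finset (Fin (k-1))).image (fun s => Sum.inr ⟨p.1, (p.2, s)⟩))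

def flowerE : Finset (Finset (FlowerV k n a)) := Finset.image (flowerEdge k n a) Finset.univ

lemma mem_inl_flowerEdge (i : Fin n) (p : (i : Fin n) × Fin (a i)) :
    Sum.inl i ∈ flowerEdge k n a p ↔ i = p.1 := by
  simp [flowerEdge]

lemma mem_inr_flowerEdge (q : (i : Fin n) × (Fin (a i) × Fin (k-1)))
    (p : (i : Fin n) × Fin (a i)) :
    Sum.inr q ∈ flowerEdge k n a p ↔ (⟨q.1, q.2.1⟩ : (i : Fin n) × Fin (a i)) = p := by
  simp only [flowerEdge, Finset.mem_insert, Finset.mem_image, Finset.mem_univ, true_and,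
    reduceCtorEq, false_or]
  constructor
  · rintro ⟨s, hs⟩
    obtain ⟨i, t, u⟩ := q
    obtain ⟨i', t'⟩ := p
    obtain ⟨h1, h2⟩ := Sigma.mk.inj_iff.mp (Sum.inr.inj hs).symm
    subst h1
    have h3 : t = t' := congrArg Prod.fst (eq_of_heq h2)
    simp [h3]
  · rintro h
    obtain ⟨i, t, u⟩ := q
    obtain ⟨i', t'⟩ := p
    obtain ⟨h1, h2⟩ := Sigma.mk.inj_iff.mp h
    subst h1
    obtain rfl := eq_of_heq h2
    exact ⟨u, rfl⟩

lemma card_flowerEdge (hk : 2 ≤ k) (p : (i : Fin n) × Fin (a i)) :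
    (flowerEdge k n a p).card = k := by
  rw [flowerEdge, Finset.card_insert_of_notMem (by simp), Finset.card_image_of_injective _
    (fun s s' h => by simpa using h), Finset.card_univ, Fintype.card_fin]
  omega

lemma flowerEdge_injective (hk : 2 ≤ k) : Function.Injective (flowerEdge k n a) := by
  intro p q h
  have hs0 : (0 : ℕ) < k - 1 := by omega
  have hmem : Sum.inr (⟨p.1, (p.2, ⟨0, hs0⟩)⟩ : (i : Fin n) × (Fin (a i) × Fin (k-1)))
      ∈ flowerEdge k n a q := by
    rw [← h, mem_inr_flowerEdge]
  have := (mem_inr_flowerEdge k n a _ q).mp hmem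
  simpa using this

lemma deg_inl (hk : 2 ≤ k) (i : Fin n) : deg (flowerE k n a) (Sum.inl i) = a i := by
  rw [deg, flowerE, Finset.filter_image,
    Finset.card_image_of_injective _ (flowerEdge_injective k n a hk)]
  have h4 : (Finset.univ.filter fun p : (i : Fin n) × Fin (a i) =>
      Sum.inl i ∈ flowerEdge k n a p) = Finset.image (Sigma.mk i) Finset.univ := by
    ext p
    simp only [Finset.mem_filter, Finset.mem_univ, true_and, mem_inl_flowerEdge,
      Finset.mem_image]
    constructor
    · rintro rfl; exact ⟨p.2, rfl⟩
    · rintro ⟨t, rfl⟩; rfl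
  rw [h4, Finset.card_image_of_injective _ sigma_mk_injective, Finset.card_univ,
    Fintype.card_fin]

lemma deg_inr (hk : 2 ≤ k) (q : (i : Fin n) × (Fin (a i) × Fin (k-1))) :
    deg (flowerE k n a) (Sum.inr q) = 1 := by
  rw [deg, flowerE, Finset.filter_image,
    Finset.card_image_of_injective _ (flowerEdge_injective k n a hk)]
  have h4 : (Finset.univ.filter fun p : (i : Fin n) × Fin (a i) =>
      Sum.inr q ∈ flowerEdge k n a p) = {⟨q.1, q.2.1⟩} := by
    ext p
    simp [mem_inr_flowerEdge, eq_comm]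
  rw [h4, Finset.card_singleton]

lemma card_flowerE (hk : 2 ≤ k) : ∀ e ∈ flowerE k n a, e.card = k := by
  intro e he
  obtain ⟨p, -, rfl⟩ := Finset.mem_image.mp he
  exact card_flowerEdge k n a hk p

lemma flower_hom (hk : 2 ≤ k) (b : ℕ) :
    hypHomCount (hyperstarEdges k b) (flowerE k n a)
      = (∑ i, (Nat.factorial (k-1) * a i) ^ b)
        + ((∑ i, a i) * (k-1)) * (Nat.factorial (k-1)) ^ b := by
  rw [hom_formula k b hk _ (card_flowerE k n a hk), Fintype.sum_sum_type]
  congr 1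
  · exact Finset.sum_congr rfl fun i _ => by rw [deg_inl k n a hk i]
  · rw [Finset.sum_congr rfl fun q (hq : q ∈ Finset.univ) => by
      rw [deg_inr k n a hk q, mul_one]]
    rw [Finset.sum_const, Finset.card_univ, smul_eq_mul]
    congr 1
    simp [Fintype.card_sigma, ← Finset.sum_mul]

end HSP

namespace HSP
open Finset Filter Topology

lemma forward_mem (k ℓ : ℕ) (hk : 2 ≤ k) (v : Fin (ℓ - 1) → ℝ)
    (h : ∃ (V : Type) (_ : Fintype V) (_ : DecidableEq V) (E : Finset (Finset V)),
        (∀ e ∈ E, e.card = k) ∧ hypHomCount (hyperstarEdges k k) E ≠ 0 ∧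
        ∀ j : Fin (ℓ - 1), v j =
          (hypHomCount (hyperstarEdges k (((j : ℕ) + 2) * k)) E : ℝ) /
            (hypHomCount (hyperstarEdges k k) E : ℝ) ^ ((j : ℕ) + 2)) :
    ∃ (n : ℕ) (x : Fin n → ℝ), (∀ i, 0 ≤ x i) ∧ (∑ i, x i) = 1 ∧
      ∀ j : Fin (ℓ - 1), v j = ∑ i, x i ^ ((j : ℕ) + 2) := by
  obtain ⟨V, hF, hDe, E, hE, hne, hv⟩ := h
  letI := hF; letI := hDe
  set c : V → ℝ := fun w => (Nat.factorial (k-1) : ℝ) * (deg E w : ℝ) with hc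
  have hcast : ∀ b, ((hypHomCount (hyperstarEdges k b) E : ℕ) : ℝ) = ∑ w, c w ^ b := by
    intro b
    rw [hom_formula k b hk E hE]
    push_cast
    rfl
  have hD0 : (∑ w, c w ^ k) ≠ 0 := by
    rw [← hcast k]
    exact_mod_cast hne
  have hcnn : ∀ w, 0 ≤ c w := fun w => by positivity
  have hDnn : 0 ≤ ∑ w, c w ^ k :=
    Finset.sum_nonneg fun w _ => pow_nonneg (hcnn w) k
  refine ⟨Fintype.card V,
    fun i => c ((Fintype.equivFin V).symm i) ^ k / (∑ w, c w ^ k), ?_, ?_, ?_⟩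
  · intro i; exact div_nonneg (pow_nonneg (hcnn _) _) hDnn
  · rw [← Finset.sum_div,
      Equiv.sum_comp ((Fintype.equivFin V).symm) (fun w => c w ^ k), div_self hD0]
  · intro j
    rw [hv j, hcast, hcast]
    simp_rw [div_pow, ← pow_mul, ← Finset.sum_div]
    rw [Equiv.sum_comp ((Fintype.equivFin V).symm) (fun w => c w ^ (k * ((j:ℕ)+2))),
      mul_comm k ((j:ℕ)+2)]

noncomputable def Xseq (k n : ℕ) (a : ℕ → Fin n → ℕ) (b N : ℕ) : ℝ :=
  (∑ i, ((a N i : ℝ)/N)^b)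
    + ((∑ i, (a N i : ℝ)/N) * ((k-1 : ℕ) : ℝ)) / (N:ℝ)^(b-1)

lemma Xlim (k n : ℕ) (a : ℕ → Fin n → ℕ) (y : Fin n → ℝ)
    (hL1 : ∀ i, Tendsto (fun N : ℕ => (a N i : ℝ) / N) atTop (𝓝 (y i)))
    (b : ℕ) (hb : 2 ≤ b) :
    Tendsto (Xseq k n a b) atTop (𝓝 (∑ i, y i ^ b)) := by
  have h1 : Tendsto (fun N => ∑ i, ((a N i:ℝ)/N)^b) atTop (𝓝 (∑ i, y i ^ b)) :=
    tendsto_finset_sum _ (fun i _ => (hL1 i).pow b)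
  have h3 : Tendsto (fun N : ℕ => (∑ i, (a N i : ℝ)/N) * ((k-1 : ℕ) : ℝ)) atTop
      (𝓝 ((∑ i, y i) * ((k-1 : ℕ) : ℝ))) :=
    (tendsto_finset_sum _ fun i _ => hL1 i).mul tendsto_const_nhds
  have h4 : Tendsto (fun N : ℕ => ((N:ℝ)^(b-1))⁻¹) atTop (𝓝 0) :=
    ((tendsto_pow_atTop (by omega : b - 1 ≠ 0)).comp
      tendsto_natCast_atTop_atTop).inv_tendsto_atTop
  have h2 := h3.mul h4
  rw [mul_zero] at h2
  have h6 := h1.add h2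
  rw [add_zero] at h6
  refine h6.congr fun N => ?_
  rw [Xseq, div_eq_mul_inv]

lemma Heq (k n : ℕ) (hk : 2 ≤ k) (a : ℕ → Fin n → ℕ) (b : ℕ) (hb : 1 ≤ b)
    (N : ℕ) (hN : 1 ≤ N) :
    ((hypHomCount (hyperstarEdges k b) (flowerE k n (a N)) : ℕ) : ℝ)
      = ((Nat.factorial (k-1) : ℝ) * (N:ℝ))^b * Xseq k n a b N := by
  have hN0 : (0:ℝ) < N := by exact_mod_cast hN
  rw [flower_hom k n (a N) hk b, Xseq]
  push_cast
  rw [mul_add]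
  congr 1
  · rw [Finset.mul_sum]
    refine Finset.sum_congr rfl fun i _ => ?_
    rw [div_pow, mul_pow]
    field_simp
    ring
  · rw [← Finset.sum_div]
    have hNb : (N:ℝ)^b = (N:ℝ)^(b-1) * N := by
      rw [pow_sub_one_mul (by omega) (N:ℝ)]
    rw [mul_pow, hNb]
    field_simp

noncomputable def wseq (k ℓ n : ℕ) (a : ℕ → Fin n → ℕ) (N : ℕ) : Fin (ℓ-1) → ℝ :=
  fun j => (hypHomCount (hyperstarEdges k (((j : ℕ) + 2) * k)) (flowerE k n (a N)) : ℝ) /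
    (hypHomCount (hyperstarEdges k k) (flowerE k n (a N)) : ℝ) ^ ((j : ℕ) + 2)

lemma backward_mem (k ℓ : ℕ) (hk : 2 ≤ k) (v : Fin (ℓ - 1) → ℝ)
    (n : ℕ) (x : Fin n → ℝ) (hx0 : ∀ i, 0 ≤ x i) (hx1 : (∑ i, x i) = 1)
    (hv : ∀ j : Fin (ℓ - 1), v j = ∑ i, x i ^ ((j : ℕ) + 2)) :
    v ∈ closure {v : Fin (ℓ - 1) → ℝ |
      ∃ (V : Type) (_ : Fintype V) (_ : DecidableEq V) (E : Finset (Finset V)),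
        (∀ e ∈ E, e.card = k) ∧ hypHomCount (hyperstarEdges k k) E ≠ 0 ∧
        ∀ j : Fin (ℓ - 1), v j =
          (hypHomCount (hyperstarEdges k (((j : ℕ) + 2) * k)) E : ℝ) /
            (hypHomCount (hyperstarEdges k k) E : ℝ) ^ ((j : ℕ) + 2)} := by
  have hy0 : ∀ i, 0 ≤ x i ^ ((k : ℝ)⁻¹) := fun i => Real.rpow_nonneg (hx0 i) _
  set y : Fin n → ℝ := fun i => x i ^ ((k : ℝ)⁻¹) with hy
  have hyk : ∀ i, y i ^ k = x i := fun i =>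
    Real.rpow_inv_natCast_pow (hx0 i) (by omega)
  have hyx : (∑ i, y i ^ k) = 1 := by simp_rw [hyk]; exact hx1
  set a : ℕ → Fin n → ℕ := fun N i => ⌈(N : ℝ) * y i⌉₊ with ha
  have hL1 : ∀ i, Tendsto (fun N : ℕ => (a N i : ℝ) / N) atTop (𝓝 (y i)) := by
    intro i
    have hub : Tendsto (fun N : ℕ => y i + 1 / N) atTop (𝓝 (y i)) := by
      simpa using tendsto_const_nhds.add (tendsto_one_div_atTop_nhds_zero_nat (𝕜 := ℝ))
    apply tendsto_of_tendsto_of_tendsto_of_le_of_le' tendsto_const_nhds hub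
    · filter_upwards [eventually_ge_atTop 1] with N hN
      have hN0 : (0:ℝ) < N := by exact_mod_cast hN
      rw [le_div_iff₀ hN0, mul_comm]
      exact Nat.le_ceil _
    · filter_upwards [eventually_ge_atTop 1] with N hN
      have hN0 : (0:ℝ) < N := by exact_mod_cast hN
      rw [div_le_iff₀ hN0, add_mul, one_div, inv_mul_cancel₀ hN0.ne']
      have h5 := (Nat.ceil_lt_add_one
        (mul_nonneg hN0.le (hy0 i) : (0:ℝ) ≤ (N:ℝ) * y i)).le
      calc (a N i : ℝ) ≤ (N:ℝ) * y i + 1 := h5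
        _ = y i * N + 1 := by ring
  obtain ⟨i0, hi0⟩ : ∃ i, x i ≠ 0 := by
    by_contra hcon
    push_neg at hcon
    rw [Finset.sum_congr rfl (fun i _ => hcon i)] at hx1
    simp at hx1
  have hxpos : 0 < x i0 := lt_of_le_of_ne (hx0 i0) (Ne.symm hi0)
  have hy0pos : 0 < y i0 := Real.rpow_pos_of_pos hxpos _
  have hmem : ∀ᶠ N in atTop, wseq k ℓ n a N ∈ {v : Fin (ℓ - 1) → ℝ |
      ∃ (V : Type) (_ : Fintype V) (_ : DecidableEq V) (E : Finset (Finset V)),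
        (∀ e ∈ E, e.card = k) ∧ hypHomCount (hyperstarEdges k k) E ≠ 0 ∧
        ∀ j : Fin (ℓ - 1), v j =
          (hypHomCount (hyperstarEdges k (((j : ℕ) + 2) * k)) E : ℝ) /
            (hypHomCount (hyperstarEdges k k) E : ℝ) ^ ((j : ℕ) + 2)} := by
    filter_upwards [eventually_ge_atTop 1] with N hN
    refine ⟨FlowerV k n (a N), inferInstance, inferInstance, flowerE k n (a N),
      card_flowerE k n (a N) hk, ?_, fun j => rfl⟩
    rw [flower_hom k n (a N) hk k]
    have hN0 : (0:ℝ) < N := by exact_mod_cast hN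
    have hai : 1 ≤ a N i0 := by
      rw [ha]
      exact Nat.one_le_ceil_iff.mpr (mul_pos hN0 hy0pos)
    have hterm : 0 < (Nat.factorial (k-1) * a N i0)^k :=
      pow_pos (Nat.mul_pos (Nat.factorial_pos _) hai) k
    have hle := Finset.single_le_sum
      (f := fun i => (Nat.factorial (k-1) * a N i)^k)
      (fun i _ => Nat.zero_le _) (Finset.mem_univ i0)
    have hpos : 0 < ∑ i, (Nat.factorial (k-1) * a N i)^k :=
      lt_of_lt_of_le hterm (by simpa using hle)
    exact (Nat.add_pos_left hpos _).ne'
  have htend : Tendsto (wseq k ℓ n a) atTop (𝓝 v) := by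
    rw [tendsto_pi_nhds]
    intro j
    have hm : 2 ≤ ((j:ℕ)+2)*k := le_trans hk (Nat.le_mul_of_pos_left k (by omega))
    have hlim := (Xlim k n a y hL1 _ hm).div ((Xlim k n a y hL1 k hk).pow ((j:ℕ)+2))
      (by rw [hyx]; norm_num)
    have hval : (∑ i, y i ^ (((j:ℕ)+2)*k)) / ((∑ i, y i ^ k))^((j:ℕ)+2) = v j := by
      rw [hyx, one_pow, div_one, hv j]
      refine Finset.sum_congr rfl fun i _ => ?_
      rw [mul_comm, pow_mul, hyk]
    rw [← hval]
    refine hlim.congr' ?_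
    filter_upwards [eventually_ge_atTop 1] with N hN
    have hN0 : (0:ℝ) < N := by exact_mod_cast hN
    simp only [wseq, Pi.div_apply]
    rw [Heq k n hk a _ (by omega) N hN, Heq k n hk a k (by omega) N hN,
      mul_pow (((Nat.factorial (k-1) : ℝ) * (N:ℝ))^k) (Xseq k n a k N) ((j:ℕ)+2),
      ← pow_mul, show k * ((j:ℕ)+2) = ((j:ℕ)+2)*k from mul_comm _ _]
    exact (mul_div_mul_left _ _ (by positivity)).symm
  exact mem_closure_of_tendsto htend hmem

end HSP

/-- The hyperstar ratio profile equals the power-sum profile: the closure of the points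
`(hom(S^(k)_{2k};G)/hom(S^(k)_k;G)^2, …, hom(S^(k)_{ℓk};G)/hom(S^(k)_k;G)^ℓ)` over all
`k`-uniform hypergraphs `G` with `hom(S^(k)_k;G) ≠ 0` equals `Π_ℓ`. -/
theorem hyperstar_ratio_profile_eq_powerSumProfile (k ℓ : ℕ) (hk : 2 ≤ k) (hℓ : 2 ≤ ℓ) :
    closure {v : Fin (ℓ - 1) → ℝ |
      ∃ (V : Type) (_ : Fintype V) (_ : DecidableEq V) (E : Finset (Finset V)),
        (∀ e ∈ E, e.card = k) ∧ hypHomCount (hyperstarEdges k k) E ≠ 0 ∧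
        ∀ j : Fin (ℓ - 1), v j =
          (hypHomCount (hyperstarEdges k (((j : ℕ) + 2) * k)) E : ℝ) /
            (hypHomCount (hyperstarEdges k k) E : ℝ) ^ ((j : ℕ) + 2)} =
      powerSumProfile ℓ := by
  apply Set.Subset.antisymm
  · unfold powerSumProfile
    refine closure_minimal (fun v hv => subset_closure ?_) isClosed_closure
    exact HSP.forward_mem k ℓ hk v hv
  · unfold powerSumProfile
    refine closure_minimal ?_ isClosed_closure
    rintro v ⟨n, x, hx0, hx1, hv⟩
    exact HSP.backward_mem k ℓ hk v n x hx0 hx1 hv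
end

section
/- For the usual star graphs (k = 2 case): the closure of the set of points ( hom(K_{1,2j};G)/hom(K_{1,2};G)^j )_{j=2,...,ℓ} over all finite simple graphs G with at least one edge equals the power-sum profile Π_ℓ. In particular, for every graph G with an edge there exist nonnegative reals x_v summing to 1 (namely x_v = d(v)^2/Σ_u d(u)^2) with hom(K_{1,2j};G)/hom(K_{1,2};G)^j = Σ_v x_v^j. -/
open SimpleGraph

/-- The star `K_{1,b}` with `b` leaves. -/
def starGraph (b : ℕ) : SimpleGraph (Fin 1 ⊕ Fin b) := completeBipartiteGraph (Fin 1) (Fin b)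

/-! ### Auxiliary results -/

section HomCount

/-- Homs from the star with `b` leaves are governed by choosing a center image and
neighbors for the leaves. -/
def starHomEquiv {V : Type*} (b : ℕ) (G : SimpleGraph V) :
    (_root_.starGraph b →g G) ≃ (Σ v : V, (Fin b → G.neighborSet v)) where
  toFun f := ⟨f (.inl 0), fun i => ⟨f (.inr i), f.map_adj (by simp [_root_.starGraph])⟩⟩
  invFun p :=
    { toFun := Sum.elim (fun _ => p.1) (fun i => (p.2 i : V))
      map_rel' := by
        rintro (a | a) (c | c) h <;> simp [_root_.starGraph] at h ⊢
        · exact (p.2 c).2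
        · exact ((p.2 a).2).symm }
  left_inv f := by
    ext v
    rcases v with a | a
    · have : a = 0 := Subsingleton.elim _ _
      subst this; rfl
    · rfl
  right_inv p := rfl

theorem homCount_starGraph {V : Type*} [Fintype V] (b : ℕ) (G : SimpleGraph V)
    [DecidableRel G.Adj] : homCount (_root_.starGraph b) G = ∑ v : V, G.degree v ^ b := by
  rw [homCount, Nat.card_congr (starHomEquiv b G), Nat.card_eq_fintype_card,
    Fintype.card_sigma]
  congr 1
  ext v
  rw [Fintype.card_fun, Fintype.card_fin, G.card_neighborSet_eq_degree]

theorem sum_deg_sq_pos {V : Type*} [Fintype V] (G : SimpleGraph V) [DecidableRel G.Adj]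
    (h : G.edgeSet.Nonempty) : 0 < ∑ v : V, (G.degree v : ℝ) ^ 2 := by
  obtain ⟨e, he⟩ := h
  induction e with
  | h u w =>
    rw [mem_edgeSet] at he
    have hd : 0 < G.degree u := by
      rw [G.degree_pos_iff_exists_adj]; exact ⟨w, he⟩
    apply Finset.sum_pos' (fun v _ => by positivity)
    exact ⟨u, Finset.mem_univ u, by positivity⟩

theorem homCount_ratio {V : Type*} [Fintype V] (G : SimpleGraph V) [DecidableRel G.Adj]
    (j : ℕ) :
    (homCount (_root_.starGraph (2 * j)) G : ℝ) / (homCount (_root_.starGraph 2) G : ℝ) ^ j =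
      ∑ v : V, ((G.degree v : ℝ) ^ 2 / ∑ u : V, (G.degree u : ℝ) ^ 2) ^ j := by
  rw [homCount_starGraph, homCount_starGraph]
  push_cast
  rw [Finset.sum_div]
  refine Finset.sum_congr rfl fun v _ => ?_
  rw [div_pow, pow_mul]

end HomCount

section StarUnion

variable {n : ℕ}

/-- Disjoint union of stars: for each `i : Fin n` a star with center `(i,0)` and
leaves `(i,b)` for `1 ≤ b ≤ m i`; other vertices isolated. -/
def starUnion (n t : ℕ) (m : Fin n → ℕ) : SimpleGraph (Fin n × Fin (t + 1)) where
  Adj p q := p.1 = q.1 ∧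
    (((p.2 : ℕ) = 0 ∧ (q.2 : ℕ) ≠ 0 ∧ (q.2 : ℕ) ≤ m p.1) ∨
     ((q.2 : ℕ) = 0 ∧ (p.2 : ℕ) ≠ 0 ∧ (p.2 : ℕ) ≤ m p.1))
  symm := by
    constructor
    rintro p q ⟨h1, h2⟩
    refine ⟨h1.symm, ?_⟩
    rw [← h1]
    tauto
  loopless := by constructor; rintro p ⟨-, h⟩; omega

instance (t : ℕ) (m : Fin n → ℕ) : DecidableRel (starUnion n t m).Adj :=
  fun _ _ => instDecidableAnd

lemma starUnion_adj (t : ℕ) (m : Fin n → ℕ) (p q : Fin n × Fin (t + 1)) :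
    (starUnion n t m).Adj p q ↔ p.1 = q.1 ∧
      (((p.2 : ℕ) = 0 ∧ (q.2 : ℕ) ≠ 0 ∧ (q.2 : ℕ) ≤ m p.1) ∨
       ((q.2 : ℕ) = 0 ∧ (p.2 : ℕ) ≠ 0 ∧ (p.2 : ℕ) ≤ m p.1)) := Iff.rfl

lemma cardAux (t mi : ℕ) (h : mi ≤ t) :
    ∑ b : Fin t, (if (b : ℕ) + 1 ≤ mi then 1 else 0) = mi := by
  rw [Fin.sum_univ_eq_sum_range (fun k => if k + 1 ≤ mi then 1 else 0), ← Finset.card_filter]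
  have : (Finset.range t).filter (fun k => k + 1 ≤ mi) = Finset.range mi := by
    ext k; simp only [Finset.mem_filter, Finset.mem_range]; omega
  rw [this, Finset.card_range]

lemma degree_starUnion (t : ℕ) (m : Fin n → ℕ) (h : ∀ i, m i ≤ t) (p : Fin n × Fin (t + 1)) :
    (starUnion n t m).degree p =
      if (p.2 : ℕ) = 0 then m p.1 else if (p.2 : ℕ) ≤ m p.1 then 1 else 0 := by
  classical
  have hbs : ∀ b : Fin t, ((Fin.succ b : Fin (t + 1)) : ℕ) = (b : ℕ) + 1 := fun b => rfl
  rw [← card_neighborFinset_eq_degree, neighborFinset_eq_filter, Finset.card_filter,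
    Fintype.sum_prod_type]
  rw [Finset.sum_eq_single_of_mem p.1 (Finset.mem_univ _) ?side]
  case side =>
    intro i' _ hne
    apply Finset.sum_eq_zero
    intro b _
    rw [if_neg]
    rw [starUnion_adj]
    rintro ⟨h1, -⟩
    exact hne h1.symm
  · rw [Fin.sum_univ_succ]
    by_cases h0 : (p.2 : ℕ) = 0
    · rw [if_pos h0]
      rw [if_neg (by rw [starUnion_adj]; rintro ⟨-, hb⟩; simp only [Fin.val_zero] at hb; omega)]
      rw [zero_add, ← cardAux t (m p.1) (h p.1)]
      apply Finset.sum_congr rfl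
      intro b _
      apply if_congr _ rfl rfl
      rw [starUnion_adj]
      simp only [hbs]
      constructor
      · rintro ⟨-, hb⟩; omega
      · intro hb; exact ⟨trivial, Or.inl ⟨h0, by omega, hb⟩⟩
    · rw [if_neg h0]
      have hadj0 : (starUnion n t m).Adj p (p.1, 0) ↔ (p.2 : ℕ) ≤ m p.1 := by
        rw [starUnion_adj]
        simp only [Fin.val_zero]
        constructor
        · rintro ⟨-, hb⟩; omega
        · intro hb; exact ⟨trivial, Or.inr ⟨trivial, h0, hb⟩⟩
      have hrest : ∀ b : Fin t, ¬ (starUnion n t m).Adj p (p.1, Fin.succ b) := by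
        intro b
        rw [starUnion_adj]
        simp only [hbs]
        rintro ⟨-, hb⟩
        omega
      rw [Finset.sum_eq_zero (fun b _ => if_neg (hrest b)), add_zero]
      by_cases hle : (p.2 : ℕ) ≤ m p.1
      · rw [if_pos hle, if_pos (hadj0.2 hle)]
      · rw [if_neg hle, if_neg (fun hc => hle (hadj0.1 hc))]

lemma sum_pow_deg (t : ℕ) (m : Fin n → ℕ) (h : ∀ i, m i ≤ t) (k : ℕ) (hk : 1 ≤ k) :
    ∑ p : Fin n × Fin (t + 1), ((starUnion n t m).degree p : ℝ) ^ k
      = ∑ i : Fin n, ((m i : ℝ) ^ k + (m i : ℝ)) := by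
  have hbs : ∀ b : Fin t, ((Fin.succ b : Fin (t + 1)) : ℕ) = (b : ℕ) + 1 := fun b => rfl
  rw [Fintype.sum_prod_type]
  apply Finset.sum_congr rfl
  intro i _
  rw [Fin.sum_univ_succ]
  congr 1
  · rw [degree_starUnion t m h (i, 0)]; simp
  · rw [← cardAux t (m i) (h i)]
    push_cast
    apply Finset.sum_congr rfl
    intro b _
    rw [degree_starUnion t m h (i, Fin.succ b)]
    simp only [hbs]
    rw [if_neg (by omega : ¬((b : ℕ) + 1 = 0))]
    by_cases hle : (b : ℕ) + 1 ≤ m i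
    · simp [hle]
    · simp [hle, zero_pow (by omega : k ≠ 0)]

end StarUnion

section Limits

open Finset Filter Topology

lemma div_div_aux (a b c : ℝ) (hc : c ≠ 0) : (a / c) / (b / c) = a / b := by
  rcases eq_or_ne b 0 with rfl | hb
  · simp
  · field_simp

variable {n : ℕ} (x : Fin n → ℝ)

noncomputable def mFun (x : Fin n → ℝ) (t : ℕ) (i : Fin n) : ℕ := ⌊(t : ℝ) * Real.sqrt (x i)⌋₊

lemma mFun_le (hx0 : ∀ i, 0 ≤ x i) (hx1 : ∑ i, x i = 1) (t : ℕ) (i : Fin n) :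
    mFun x t i ≤ t := by
  have hxi : x i ≤ 1 := by
    rw [← hx1]
    exact Finset.single_le_sum (fun j _ => hx0 j) (Finset.mem_univ i)
  have h1 : Real.sqrt (x i) ≤ 1 := by
    rw [show (1:ℝ) = Real.sqrt 1 by simp]
    exact Real.sqrt_le_sqrt hxi
  have h0 : (0:ℝ) ≤ Real.sqrt (x i) := Real.sqrt_nonneg _
  calc mFun x t i ≤ ⌊(t : ℝ)⌋₊ :=
        Nat.floor_le_floor (by nlinarith [Nat.cast_nonneg (α := ℝ) t])
    _ = t := Nat.floor_natCast t

lemma tendsto_m_div (i : Fin n) :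
    Tendsto (fun t : ℕ => (mFun x t i : ℝ) / t) atTop (𝓝 (Real.sqrt (x i))) := by
  apply tendsto_of_tendsto_of_tendsto_of_le_of_le'
    (g := fun t : ℕ => Real.sqrt (x i) - 1 / t) (h := fun _ : ℕ => Real.sqrt (x i))
  · simpa using tendsto_const_nhds.sub (tendsto_one_div_atTop_nhds_zero_nat (𝕜 := ℝ))
  · exact tendsto_const_nhds
  · filter_upwards [eventually_ge_atTop 1] with t ht
    have ht' : (0:ℝ) < t := by exact_mod_cast ht
    rw [sub_le_iff_le_add, ← add_div, le_div_iff₀ ht']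
    have := Nat.sub_one_lt_floor ((t : ℝ) * Real.sqrt (x i))
    unfold mFun
    nlinarith
  · filter_upwards [eventually_ge_atTop 1] with t ht
    have ht' : (0:ℝ) < t := by exact_mod_cast ht
    rw [div_le_iff₀ ht']
    have h1 := Nat.floor_le (by positivity : (0:ℝ) ≤ (t : ℝ) * Real.sqrt (x i))
    unfold mFun
    nlinarith

noncomputable def SFun (x : Fin n → ℝ) (t : ℕ) : ℝ :=
  ∑ i, ((mFun x t i : ℝ) ^ 2 + (mFun x t i : ℝ))

noncomputable def MFun (x : Fin n → ℝ) (t : ℕ) : ℝ := ∑ i, (mFun x t i : ℝ)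

lemma tendsto_S_div (hx0 : ∀ i, 0 ≤ x i) (hx1 : ∑ i, x i = 1) :
    Tendsto (fun t : ℕ => SFun x t / (t : ℝ) ^ 2) atTop (𝓝 1) := by
  have key : ∀ i : Fin n, Tendsto (fun t : ℕ =>
      ((mFun x t i : ℝ) ^ 2 + (mFun x t i : ℝ)) / (t : ℝ) ^ 2) atTop (𝓝 (x i)) := by
    intro i
    have h1 := tendsto_m_div x i
    have h2 : Tendsto (fun t : ℕ => ((mFun x t i : ℝ) / t) ^ 2
        + ((mFun x t i : ℝ) / t) * (1 / t)) atTop (𝓝 (x i)) := by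
      have := (h1.pow 2).add (h1.mul tendsto_one_div_atTop_nhds_zero_nat)
      simpa [Real.sq_sqrt (hx0 i)] using this
    apply h2.congr'
    filter_upwards [eventually_ge_atTop 1] with t ht
    have ht' : ((t:ℝ)) ≠ 0 := by
      have : (0:ℝ) < t := by exact_mod_cast ht
      exact this.ne'
    field_simp
  have := tendsto_finset_sum Finset.univ (fun i _ => key i)
  rw [hx1] at this
  apply this.congr
  intro t
  rw [SFun, Finset.sum_div]

lemma tendsto_M_div : Tendsto (fun t : ℕ => MFun x t / (t : ℝ) ^ 2) atTop (𝓝 0) := by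
  have key : ∀ i : Fin n, Tendsto (fun t : ℕ => (mFun x t i : ℝ) / (t : ℝ) ^ 2)
      atTop (𝓝 0) := by
    intro i
    have h1 := (tendsto_m_div x i).mul tendsto_one_div_atTop_nhds_zero_nat
    rw [mul_zero] at h1
    apply h1.congr
    intro t
    rw [div_mul_div_comm, mul_one, sq]
  have := tendsto_finset_sum Finset.univ (fun i _ => key i)
  rw [Finset.sum_const_zero] at this
  apply this.congr
  intro t
  rw [MFun, Finset.sum_div]

lemma eventually_S_pos (hx0 : ∀ i, 0 ≤ x i) (hx1 : ∑ i, x i = 1) :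
    ∀ᶠ t : ℕ in atTop, ∃ i0 : Fin n, 1 ≤ mFun x t i0 ∧ 1 ≤ SFun x t := by
  have hex : ∃ i0, 0 < x i0 := by
    by_contra h
    push_neg at h
    have : ∑ i, x i = 0 := Finset.sum_eq_zero (fun i _ => le_antisymm (h i) (hx0 i))
    rw [hx1] at this; norm_num at this
  obtain ⟨i0, hi0⟩ := hex
  have hs : 0 < Real.sqrt (x i0) := Real.sqrt_pos.2 hi0
  filter_upwards [eventually_ge_atTop (⌈1 / Real.sqrt (x i0)⌉₊ + 1)] with t ht
  have hm : 1 ≤ mFun x t i0 := by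
    rw [mFun, Nat.one_le_floor_iff]
    have h1 : (⌈1 / Real.sqrt (x i0)⌉₊ : ℝ) ≤ t := by exact_mod_cast le_of_add_le_left ht
    have h2 : 1 / Real.sqrt (x i0) ≤ (t : ℝ) := le_trans (Nat.le_ceil _) h1
    rw [div_le_iff₀ hs] at h2
    linarith
  refine ⟨i0, hm, ?_⟩
  rw [SFun]
  calc (1:ℝ) ≤ (mFun x t i0 : ℝ) ^ 2 + (mFun x t i0 : ℝ) := by
        have : (1:ℝ) ≤ (mFun x t i0 : ℝ) := by exact_mod_cast hm
        nlinarith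
    _ ≤ _ := Finset.single_le_sum (f := fun i => (mFun x t i : ℝ) ^ 2 + (mFun x t i : ℝ))
        (fun i _ => by positivity) (Finset.mem_univ i0)

lemma tendsto_msq_div_S (hx0 : ∀ i, 0 ≤ x i) (hx1 : ∑ i, x i = 1) (i : Fin n) :
    Tendsto (fun t : ℕ => (mFun x t i : ℝ) ^ 2 / SFun x t) atTop (𝓝 (x i)) := by
  have hS := tendsto_S_div x hx0 hx1
  have hm : Tendsto (fun t : ℕ => (mFun x t i : ℝ) ^ 2 / (t:ℝ) ^ 2) atTop (𝓝 (x i)) := by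
    have := (tendsto_m_div x i).pow 2
    rw [Real.sq_sqrt (hx0 i)] at this
    apply this.congr
    intro t
    rw [div_pow]
  have := hm.div hS one_ne_zero
  rw [div_one] at this
  apply this.congr'
  filter_upwards [eventually_ge_atTop 1] with t ht
  have ht' : ((t:ℝ)^2) ≠ 0 := by
    have : (0:ℝ) < t := by exact_mod_cast ht
    positivity
  exact div_div_aux _ _ _ ht'

lemma tendsto_M_div_Spow (hx0 : ∀ i, 0 ≤ x i) (hx1 : ∑ i, x i = 1) (k : ℕ) (hk : 2 ≤ k) :
    Tendsto (fun t : ℕ => MFun x t / SFun x t ^ k) atTop (𝓝 0) := by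
  have hS := tendsto_S_div x hx0 hx1
  have hM := tendsto_M_div x
  have hinv : Tendsto (fun t : ℕ => ((t:ℝ) ^ 2 / SFun x t) ^ k) atTop (𝓝 1) := by
    have h1 : Tendsto (fun t : ℕ => (SFun x t / (t:ℝ) ^ 2)⁻¹) atTop (𝓝 1) := by
      simpa using hS.inv₀ one_ne_zero
    have h2 := h1.pow k
    rw [one_pow] at h2
    apply h2.congr
    intro t
    rw [inv_div]
  have hsmall : Tendsto (fun t : ℕ => (1 / (t:ℝ)) ^ (2 * k - 2)) atTop (𝓝 0) := by
    have := (tendsto_one_div_atTop_nhds_zero_nat (𝕜 := ℝ)).pow (2 * k - 2)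
    rwa [zero_pow (by omega : 2 * k - 2 ≠ 0)] at this
  have hprod := (hM.mul hinv).mul hsmall
  rw [zero_mul, mul_zero] at hprod
  apply hprod.congr'
  filter_upwards [eventually_ge_atTop 1, eventually_S_pos x hx0 hx1] with t ht hSpos
  obtain ⟨i0, -, hS1⟩ := hSpos
  have ht' : ((t:ℝ)) ≠ 0 := by
    have : (0:ℝ) < t := by exact_mod_cast ht
    exact this.ne'
  have hSne : SFun x t ≠ 0 := by linarith
  field_simp
  rw [div_pow ((t:ℝ) ^ 2), show ((t:ℝ) ^ 2) ^ k = (t:ℝ) ^ 2 * (t:ℝ) ^ (2 * k - 2) by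
    rw [← pow_mul, ← pow_add]; congr 1; omega, one_div_pow]
  field_simp

end Limits

section Density

open Finset Filter Topology

/-- Every power-sum point is a limit of star-ratio points of graphs (disjoint unions of
stars with suitably chosen sizes). -/
lemma power_point_mem_closure (ℓ : ℕ) {n : ℕ} (x : Fin n → ℝ)
    (hx0 : ∀ i, 0 ≤ x i) (hx1 : ∑ i, x i = 1) :
    (fun j : Fin (ℓ - 1) => ∑ i, x i ^ ((j : ℕ) + 2)) ∈
      closure {v : Fin (ℓ - 1) → ℝ |
        ∃ (V : Type) (_ : Fintype V) (G : SimpleGraph V) (_ : DecidableRel G.Adj),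
          G.edgeSet.Nonempty ∧
          ∀ j : Fin (ℓ - 1), v j =
            (homCount (_root_.starGraph (2 * ((j : ℕ) + 2))) G : ℝ) /
              (homCount (_root_.starGraph 2) G : ℝ) ^ ((j : ℕ) + 2)} := by
  set f : ℕ → (Fin (ℓ - 1) → ℝ) := fun t j =>
    ((∑ i, (mFun x t i : ℝ) ^ (2 * ((j : ℕ) + 2))) + MFun x t) / SFun x t ^ ((j : ℕ) + 2)
    with hf
  have hrw : ∀ (t : ℕ) (j : Fin (ℓ - 1)), f t j =
      (∑ i, ((mFun x t i : ℝ) ^ 2 / SFun x t) ^ ((j : ℕ) + 2))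
        + MFun x t / SFun x t ^ ((j : ℕ) + 2) := by
    intro t j
    rw [hf]
    simp only
    rw [add_div, Finset.sum_div]
    congr 1
    refine Finset.sum_congr rfl fun i _ => ?_
    rw [div_pow, pow_mul]
  apply mem_closure_of_tendsto (f := f) (b := atTop)
  · rw [tendsto_pi_nhds]
    intro j
    have h1 := tendsto_finset_sum (f := fun i (t : ℕ) =>
        ((mFun x t i : ℝ) ^ 2 / SFun x t) ^ ((j : ℕ) + 2)) Finset.univ
      (fun i _ => (tendsto_msq_div_S x hx0 hx1 i).pow ((j : ℕ) + 2))
    have h2 := tendsto_M_div_Spow x hx0 hx1 ((j : ℕ) + 2) (by omega)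
    have h3 := h1.add h2
    rw [add_zero] at h3
    apply h3.congr
    intro t
    exact (hrw t j).symm
  · filter_upwards [eventually_S_pos x hx0 hx1, eventually_ge_atTop 1] with t hSpos ht
    obtain ⟨i0, hm1, hS1⟩ := hSpos
    have hmle : ∀ i, mFun x t i ≤ t := mFun_le x hx0 hx1 t
    refine ⟨Fin n × Fin (t + 1), inferInstance, starUnion n t (mFun x t), inferInstance,
      ?_, ?_⟩
    · refine ⟨s((i0, (0 : Fin (t+1))), (i0, (⟨1, by omega⟩ : Fin (t+1)))), ?_⟩
      rw [mem_edgeSet, starUnion_adj]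
      exact ⟨rfl, Or.inl ⟨rfl, by simp, by simpa using hm1⟩⟩
    · intro j
      have hd2 : ∑ p : Fin n × Fin (t + 1), ((starUnion n t (mFun x t)).degree p : ℝ) ^ 2
          = SFun x t := sum_pow_deg t (mFun x t) hmle 2 (by omega)
      have hdk : ∑ p : Fin n × Fin (t + 1),
          ((starUnion n t (mFun x t)).degree p : ℝ) ^ (2 * ((j : ℕ) + 2))
          = (∑ i, (mFun x t i : ℝ) ^ (2 * ((j : ℕ) + 2))) + MFun x t := by
        rw [sum_pow_deg t (mFun x t) hmle (2 * ((j : ℕ) + 2)) (by omega),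
          Finset.sum_add_distrib, MFun]
      rw [homCount_starGraph, homCount_starGraph]
      push_cast
      rw [hd2, hdk, hf]

end Density

/-- The star ratio profile (`k = 2` case): the closure of the points
`(hom(K_{1,2j};G)/hom(K_{1,2};G)^j)_{j=2,…,ℓ}` over all finite simple graphs `G` with at
least one edge equals `Π_ℓ`; moreover for every such `G` the normalized squared degrees
`x_v = d(v)^2/Σ_u d(u)^2` witness the point as a power-sum vector. -/
theorem star_ratio_profile_eq_powerSumProfile (ℓ : ℕ) (hℓ : 2 ≤ ℓ) :
    (closure {v : Fin (ℓ - 1) → ℝ |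
        ∃ (V : Type) (_ : Fintype V) (G : SimpleGraph V) (_ : DecidableRel G.Adj),
          G.edgeSet.Nonempty ∧
          ∀ j : Fin (ℓ - 1), v j =
            (homCount (_root_.starGraph (2 * ((j : ℕ) + 2))) G : ℝ) /
              (homCount (_root_.starGraph 2) G : ℝ) ^ ((j : ℕ) + 2)} = powerSumProfile ℓ) ∧
      ∀ (V : Type) (_ : Fintype V) (G : SimpleGraph V) (_ : DecidableRel G.Adj),
        G.edgeSet.Nonempty →
        (∀ v : V, 0 ≤ (G.degree v : ℝ) ^ 2 / ∑ u : V, (G.degree u : ℝ) ^ 2) ∧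
        (∑ v : V, (G.degree v : ℝ) ^ 2 / ∑ u : V, (G.degree u : ℝ) ^ 2) = 1 ∧
        ∀ j : ℕ, 2 ≤ j → j ≤ ℓ →
          (homCount (_root_.starGraph (2 * j)) G : ℝ) / (homCount (_root_.starGraph 2) G : ℝ) ^ j =
            ∑ v : V, ((G.degree v : ℝ) ^ 2 / ∑ u : V, (G.degree u : ℝ) ^ 2) ^ j := by
  constructor
  · rw [powerSumProfile]
    apply subset_antisymm
    · apply closure_minimal _ isClosed_closure
      rintro v ⟨V, _, G, _, hE, hv⟩
      apply subset_closure
      have hS := sum_deg_sq_pos G hE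
      set S := ∑ u : V, (G.degree u : ℝ) ^ 2 with hSdef
      have e := (Fintype.equivFin V).symm
      refine ⟨Fintype.card V, fun i => (G.degree (e i) : ℝ) ^ 2 / S, fun i => by positivity,
        ?_, ?_⟩
      · rw [Equiv.sum_comp e (fun u => (G.degree u : ℝ) ^ 2 / S), ← Finset.sum_div,
          div_self hS.ne']
      · intro j
        rw [hv j, homCount_ratio G ((j : ℕ) + 2),
          ← Equiv.sum_comp e (fun u => ((G.degree u : ℝ) ^ 2 / S) ^ ((j : ℕ) + 2))]
    · apply closure_minimal _ isClosed_closure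
      rintro v ⟨n, x, hx0, hx1, hv⟩
      have := power_point_mem_closure ℓ x hx0 hx1
      have hveq : v = fun j : Fin (ℓ - 1) => ∑ i, x i ^ ((j : ℕ) + 2) := funext hv
      rw [hveq]
      exact this
  · intro V _ G _ hE
    have hS := sum_deg_sq_pos G hE
    refine ⟨fun v => by positivity, ?_, ?_⟩
    · rw [← Finset.sum_div, div_self hS.ne']
    · intro j _ _
      exact homCount_ratio G j
end
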